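/- arXiv:2307.09533 — 6 statements merged into one kernel-verified Lean document; each statement's English description precedes it below -/
import Mathlib

section
/- For each \delta \in (0,1) there is a constant K = K(\delta) such that the following holds. Let n \ge 2, d = \lfloor\delta n\rfloor \ge 1, and let G = (V,E) be a d-regular bipartite graph on N = 2n vertices. Then there exists a family \mathcal{C} \subseteq 2^{V} with |\mathcal{C}| \le n^{K} such that for every real t \ge 1 and every subset S \subseteq V with |\nabla(S)| \le t d, there is some C \in \mathcal{C} with |S \triangle C| \le 32 t and |\nabla(C)| \le 33 t d. -/
open scoped Classical

noncomputable section

variable {V : Type*}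

/-- The square of a graph: vertices at distance 1 or 2 are adjacent. -/
def gsq (G : SimpleGraph V) : SimpleGraph V where
  Adj u v := u ≠ v ∧ (G.Adj u v ∨ ∃ w, G.Adj u w ∧ G.Adj w v)
  symm := by
    constructor
    rintro u v ⟨h1, h2⟩
    refine ⟨h1.symm, ?_⟩
    rcases h2 with h | ⟨w, hw1, hw2⟩
    · exact Or.inl h.symm
    · exact Or.inr ⟨w, hw2.symm, hw1.symm⟩
  loopless := by constructor; rintro u ⟨h, -⟩; exact h rfl

/-- `A` is 2-linked: the subgraph of the square of `G` induced on `A` is connected. -/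
def TwoLinked (G : SimpleGraph V) (A : Finset V) : Prop :=
  ((gsq G).induce (A : Set V)).Connected

variable [Fintype V] [DecidableEq V]

/-- The neighborhood of a vertex, as a `Finset`. -/
def nbrF (G : SimpleGraph V) (v : V) : Finset V :=
  Finset.univ.filter (fun u => G.Adj v u)

/-- The neighborhood `N(A)` of a set of vertices. -/
def nbr (G : SimpleGraph V) (A : Finset V) : Finset V :=
  Finset.univ.filter (fun u => ∃ a ∈ A, G.Adj a u)

/-- The closure `[A] = {x ∈ X : N(x) ⊆ N(A)}` of `A` within the part `X`. -/
def cl (G : SimpleGraph V) (X A : Finset V) : Finset V :=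
  X.filter (fun x => nbrF G x ⊆ nbr G A)

/-- `A` is closed (within the part `X`) if `[A] = A`. -/
def IsClosedSet (G : SimpleGraph V) (X A : Finset V) : Prop :=
  cl G X A = A

/-- The 2-linked components of `A`: equivalence classes of the reachability
relation in the square of `G` restricted to `A`. -/
def comps (G : SimpleGraph V) (A : Finset V) : Finset (Finset V) :=
  A.image (fun a =>
    A.filter (fun b => Relation.ReflTransGen
      (fun u v => (gsq G).Adj u v ∧ u ∈ A ∧ v ∈ A) a b))

/-- The number of independent sets of `G` (including the empty set). -/
def numInd (G : SimpleGraph V) : ℕ :=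
  (Finset.univ.filter (fun s : Finset V => ∀ u ∈ s, ∀ v ∈ s, ¬ G.Adj u v)).card

/-- `A ⊆ X` is `t`-contracting if `|N(A)| < |[A]| + t`. -/
def Contracting (G : SimpleGraph V) (X : Finset V) (t : ℤ) (A : Finset V) : Prop :=
  ((nbr G A).card : ℤ) < ((cl G X A).card : ℤ) + t

/-- `D_A`: product over the 2-linked components `A'` of `A` of the number of
2-linked `B ⊆ A'` with `N(B) = N(A')`. -/
def DA (G : SimpleGraph V) (A : Finset V) : ℕ :=
  ∏ A' ∈ comps G A,
    (A'.powerset.filter (fun B => TwoLinked G B ∧ nbr G B = nbr G A')).card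

/-- The value `|∇(C)|` of the cut `C`: the number of edges with exactly one
endpoint in `C`. -/
def cutVal (G : SimpleGraph V) (C : Finset V) : ℕ :=
  ∑ u ∈ C, (nbrF G u \ C).card

/-- `B` is a polymer of `P_A` (a nonempty 2-linked subset of `X_A = X \ N²(A)`)
that is not `t0`-contracting. -/
def IsPolymerIn (G : SimpleGraph V) (X : Finset V) (t0 : ℤ) (A B : Finset V) : Prop :=
  B.Nonempty ∧ TwoLinked G B ∧ B ⊆ X \ nbr G (nbr G A) ∧ ¬ Contracting G X t0 B

/-- `Ξ_A`: sum over unordered compatible collections of non-`t0`-contracting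
polymers from `P_A` of `2^{-∑|N(B_i)|}`. -/
def Xi (G : SimpleGraph V) (X : Finset V) (t0 : ℤ) (A : Finset V) : ℝ :=
  ∑ F ∈ Finset.univ.filter (fun F : Finset (Finset V) =>
      (∀ B ∈ F, IsPolymerIn G X t0 A B) ∧
      (∀ B ∈ F, ∀ B' ∈ F, B ≠ B' → Disjoint (nbr G B) (nbr G B'))),
    ∏ B ∈ F, ((2:ℝ) ^ (nbr G B).card)⁻¹

/-- `𝒢(w,t)`: polymers `B ⊆ X` with `|N(B)| = w` and `|N(B)| - |[B]| = t`. -/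
def GG (G : SimpleGraph V) (X : Finset V) (w t : ℤ) : Finset (Finset V) :=
  X.powerset.filter (fun B => B.Nonempty ∧ TwoLinked G B ∧
    ((nbr G B).card : ℤ) = w ∧ ((nbr G B).card : ℤ) - ((cl G X B).card : ℤ) = t)

/-- `G` is bipartite with parts `X` and `Y`. -/
def IsBipartiteWith (G : SimpleGraph V) (X Y : Finset V) : Prop :=
  Disjoint X Y ∧ X ∪ Y = Finset.univ ∧
    ∀ u v, G.Adj u v → (u ∈ X ∧ v ∈ Y) ∨ (u ∈ Y ∧ v ∈ X)

/-- `G` is `d`-regular. -/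
def IsRegularDeg (G : SimpleGraph V) (d : ℕ) : Prop :=
  ∀ v, (nbrF G v).card = d

/-- `d_S(v)`: number of neighbors of `v` in `S`. -/
def degIn (G : SimpleGraph V) (v : V) (S : Finset V) : ℕ := (nbrF G v ∩ S).card

/-- `W_{d/2}`: vertices of `N(A)` with at least `d/2` neighbors in `A`. -/
def Wbig (G : SimpleGraph V) (d : ℕ) (A : Finset V) : Finset V :=
  (nbr G A).filter (fun y => (d : ℝ) / 2 ≤ (degIn G y A : ℝ))

/-- `F` is an essential set for `A`: `N(A) ⊇ F ⊇ W_{d/2}` and `N(F) ⊇ [A]`. -/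
def EssentialSet (G : SimpleGraph V) (X : Finset V) (d : ℕ) (A F : Finset V) : Prop :=
  F ⊆ nbr G A ∧ Wbig G d A ⊆ F ∧ cl G X A ⊆ nbr G F

/-- `(S,T)` is a `γ'`-container for `A`, where `t = |N(A)| - |[A]|`. -/
def IsContainer (G : SimpleGraph V) (X Y : Finset V) (d : ℕ) (γ' : ℝ)
    (A S T : Finset V) : Prop :=
  cl G X A ⊆ S ∧ Wbig G d A ⊆ T ∧ T ⊆ nbr G A ∧
  (∀ v ∈ S, (degIn G v (Y \ T) : ℝ) ≤
      γ' * (((nbr G A).card : ℝ) - ((cl G X A).card : ℝ))) ∧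
  (∀ v ∈ Y \ T, (degIn G v S : ℝ) ≤
      γ' * (((nbr G A).card : ℝ) - ((cl G X A).card : ℝ)))
namespace Stmt4Aux
set_option linter.unusedSectionVars false

open Finset

variable {V : Type*} [Fintype V] [DecidableEq V] (G : SimpleGraph V)

lemma mem_nbrF {u v : V} : u ∈ nbrF G v ↔ G.Adj v u := by
  simp [nbrF]

lemma degIn_eq_card_filter (v : V) (S : Finset V) :
    degIn G v S = (S.filter (fun u => G.Adj v u)).card := by
  unfold degIn nbrF
  congr 1
  ext u
  simp [and_comm]

lemma degIn_le (v : V) (S : Finset V) : degIn G v S ≤ (nbrF G v).card :=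
  Finset.card_le_card inter_subset_left

lemma sum_degIn_comm (P Q : Finset V) :
    ∑ v ∈ P, degIn G v Q = ∑ u ∈ Q, degIn G u P := by
  simp only [degIn_eq_card_filter, card_filter]
  rw [Finset.sum_comm]
  refine Finset.sum_congr rfl fun u hu => Finset.sum_congr rfl fun v hv => ?_
  simp [G.adj_comm]

lemma degIn_le_degIn_add (v : V) (B Q : Finset V) :
    degIn G v B ≤ degIn G v Q + (B \ Q).card := by
  have h : nbrF G v ∩ B ⊆ (nbrF G v ∩ Q) ∪ (B \ Q) := by
    intro u hu
    simp only [mem_inter, mem_union, mem_sdiff] at hu ⊢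
    by_cases hq : u ∈ Q
    · exact Or.inl ⟨hu.1, hq⟩
    · exact Or.inr ⟨hu.2, hq⟩
  calc degIn G v B ≤ ((nbrF G v ∩ Q) ∪ (B \ Q)).card := Finset.card_le_card h
    _ ≤ degIn G v Q + (B \ Q).card := Finset.card_union_le _ _

lemma card_sdiff_eq (v : V) (T : Finset V) :
    (nbrF G v \ T).card = (nbrF G v).card - degIn G v T := by
  have h1 := Finset.card_sdiff_add_card_inter (nbrF G v) T
  have h2 : degIn G v T = (nbrF G v ∩ T).card := rfl
  omega

lemma cutVal_insert_le (v : V) (C : Finset V) :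
    cutVal G (insert v C) ≤ cutVal G C + (nbrF G v).card := by
  by_cases hv : v ∈ C
  · rw [Finset.insert_eq_self.2 hv]; omega
  · unfold cutVal
    rw [Finset.sum_insert hv]
    have h1 : (nbrF G v \ insert v C).card ≤ (nbrF G v).card :=
      Finset.card_le_card (Finset.sdiff_subset)
    have h2 : ∀ u ∈ C, (nbrF G u \ insert v C).card ≤ (nbrF G u \ C).card := by
      intro u _
      exact Finset.card_le_card (Finset.sdiff_subset_sdiff (le_refl _) (Finset.subset_insert _ _))
    calc (nbrF G v \ insert v C).card + ∑ u ∈ C, (nbrF G u \ insert v C).card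
        ≤ (nbrF G v).card + ∑ u ∈ C, (nbrF G u \ C).card := by
          exact Nat.add_le_add h1 (Finset.sum_le_sum h2)
      _ = ∑ u ∈ C, (nbrF G u \ C).card + (nbrF G v).card := by omega

lemma cutVal_erase_le (v : V) (C : Finset V) :
    cutVal G (C.erase v) ≤ cutVal G C + (nbrF G v).card := by
  by_cases hv : v ∈ C
  · unfold cutVal
    have hterm : ∀ u ∈ C.erase v,
        (nbrF G u \ C.erase v).card ≤ (nbrF G u \ C).card + (if u ∈ nbrF G v then 1 else 0) := by
      intro u _
      have hsub : nbrF G u \ C.erase v ⊆ (nbrF G u \ C) ∪ (nbrF G u ∩ {v}) := by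
        intro w hw
        simp only [mem_sdiff, mem_erase, mem_union, mem_inter, mem_singleton] at hw ⊢
        by_cases hwv : w = v
        · exact Or.inr ⟨hw.1, hwv⟩
        · exact Or.inl ⟨hw.1, fun hc => hw.2 ⟨hwv, hc⟩⟩
      have : (nbrF G u ∩ {v}).card ≤ (if u ∈ nbrF G v then 1 else 0) := by
        by_cases h : u ∈ nbrF G v
        · simp only [h, if_true]
          calc (nbrF G u ∩ {v}).card ≤ ({v} : Finset V).card := Finset.card_le_card inter_subset_right
            _ = 1 := Finset.card_singleton v
        · simp only [h, if_false]
          have : nbrF G u ∩ {v} = ∅ := by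
            ext w
            simp only [mem_inter, mem_singleton, Finset.notMem_empty, iff_false]
            rintro ⟨hw1, rfl⟩
            exact h (by rw [mem_nbrF] at hw1 ⊢; exact hw1.symm)
          simp [this]
      calc (nbrF G u \ C.erase v).card ≤ ((nbrF G u \ C) ∪ (nbrF G u ∩ {v})).card :=
            Finset.card_le_card hsub
        _ ≤ (nbrF G u \ C).card + (nbrF G u ∩ {v}).card := Finset.card_union_le _ _
        _ ≤ (nbrF G u \ C).card + (if u ∈ nbrF G v then 1 else 0) := by omega
    calc ∑ u ∈ C.erase v, (nbrF G u \ C.erase v).card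
        ≤ ∑ u ∈ C.erase v, ((nbrF G u \ C).card + (if u ∈ nbrF G v then 1 else 0)) :=
          Finset.sum_le_sum hterm
      _ = ∑ u ∈ C.erase v, (nbrF G u \ C).card + ∑ u ∈ C.erase v, (if u ∈ nbrF G v then 1 else 0) := by
          rw [Finset.sum_add_distrib]
      _ ≤ ∑ u ∈ C, (nbrF G u \ C).card + (nbrF G v).card := by
          have h1 : ∑ u ∈ C.erase v, (nbrF G u \ C).card ≤ ∑ u ∈ C, (nbrF G u \ C).card :=
            Finset.sum_le_sum_of_subset (Finset.erase_subset _ _)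
          have h2 : ∑ u ∈ C.erase v, (if u ∈ nbrF G v then 1 else 0) ≤ (nbrF G v).card := by
            rw [← Finset.card_filter]
            exact Finset.card_le_card (by intro u hu; exact (Finset.mem_filter.1 hu).2)
          omega
  · rw [Finset.erase_eq_self.2 hv]; omega

lemma cutVal_move {d : ℕ} (hreg : IsRegularDeg G d) :
    ∀ (k : ℕ) (P C : Finset V), ((P \ C) ∪ (C \ P)).card = k →
      cutVal G C ≤ cutVal G P + d * k := by
  intro k
  induction k with
  | zero =>
    intro P C hk
    have h : (P \ C) ∪ (C \ P) = ∅ := Finset.card_eq_zero.1 hk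
    have h1 : P \ C = ∅ := by
      rw [Finset.union_eq_empty] at h; exact h.1
    have h2 : C \ P = ∅ := by
      rw [Finset.union_eq_empty] at h; exact h.2
    have : P = C :=
      Finset.Subset.antisymm (Finset.sdiff_eq_empty_iff_subset.1 h1)
        (Finset.sdiff_eq_empty_iff_subset.1 h2)
    simp [this]
  | succ k ih =>
    intro P C hk
    have hne : ((P \ C) ∪ (C \ P)).Nonempty := by
      rw [← Finset.card_pos, hk]; omega
    obtain ⟨v, hv⟩ := hne
    rw [Finset.mem_union] at hv
    rcases hv with hv | hv
    · -- v ∈ P \ C : erase from P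
      rw [Finset.mem_sdiff] at hv
      have hset : (P.erase v \ C) ∪ (C \ P.erase v) = ((P \ C) ∪ (C \ P)).erase v := by
        ext u
        simp only [mem_union, mem_sdiff, mem_erase]
        constructor
        · rintro (⟨⟨hu1, hu2⟩, hu3⟩ | ⟨hu1, hu2⟩)
          · exact ⟨hu1, Or.inl ⟨hu2, hu3⟩⟩
          · have huv : u ≠ v := fun h => hv.2 (h ▸ hu1)
            refine ⟨huv, Or.inr ⟨hu1, fun hc => hu2 ⟨huv, hc⟩⟩⟩
        · rintro ⟨huv, (⟨hu1, hu2⟩ | ⟨hu1, hu2⟩)⟩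
          · exact Or.inl ⟨⟨huv, hu1⟩, hu2⟩
          · exact Or.inr ⟨hu1, fun hc => hu2 hc.2⟩
      have hcard : ((P.erase v \ C) ∪ (C \ P.erase v)).card = k := by
        rw [hset, Finset.card_erase_of_mem (Finset.mem_union_left _ (Finset.mem_sdiff.2 hv)), hk]
        omega
      have h1 := ih (P.erase v) C hcard
      have h2 : cutVal G (P.erase v) ≤ cutVal G P + d := by
        have := cutVal_erase_le G v P
        rw [hreg v] at this
        exact this
      have h3 : d * (k+1) = d * k + d := by ring
      omega
    · -- v ∈ C \ P : insert into P
      rw [Finset.mem_sdiff] at hv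
      have hset : (insert v P \ C) ∪ (C \ insert v P) = ((P \ C) ∪ (C \ P)).erase v := by
        ext u
        simp only [mem_union, mem_sdiff, mem_erase, mem_insert]
        constructor
        · rintro (⟨hu1 | hu1, hu2⟩ | ⟨hu1, hu2⟩)
          · exact absurd (hu1 ▸ hv.1) hu2
          · have huv : u ≠ v := fun h => hu2 (h ▸ hv.1)
            exact ⟨huv, Or.inl ⟨hu1, hu2⟩⟩
          · have huv : u ≠ v := fun h => hu2 (Or.inl h)
            exact ⟨huv, Or.inr ⟨hu1, fun hc => hu2 (Or.inr hc)⟩⟩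
        · rintro ⟨huv, (⟨hu1, hu2⟩ | ⟨hu1, hu2⟩)⟩
          · exact Or.inl ⟨Or.inr hu1, hu2⟩
          · exact Or.inr ⟨hu1, fun hc => hc.elim (fun h => huv h) hu2⟩
      have hcard : ((insert v P \ C) ∪ (C \ insert v P)).card = k := by
        rw [hset, Finset.card_erase_of_mem (Finset.mem_union_right _ (Finset.mem_sdiff.2 hv)), hk]
        omega
      have h1 := ih (insert v P) C hcard
      have h2 : cutVal G (insert v P) ≤ cutVal G P + d := by
        have := cutVal_insert_le G v P
        rw [hreg v] at this
        exact this
      have h3 : d * (k+1) = d * k + d := by ring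
      omega


section Bip
variable {V : Type*} [Fintype V] [DecidableEq V] (G : SimpleGraph V)

lemma bip_nbr {X Y : Finset V} (hbip : IsBipartiteWith G X Y) {v : V} (hv : v ∈ X) :
    nbrF G v ⊆ Y := by
  intro u hu
  rw [mem_nbrF] at hu
  rcases hbip.2.2 v u hu with ⟨h1, h2⟩ | ⟨h1, h2⟩
  · exact h2
  · exact absurd h1 (Finset.disjoint_left.1 hbip.1 hv)

lemma bip_nbr' {X Y : Finset V} (hbip : IsBipartiteWith G X Y) {v : V} (hv : v ∈ Y) :
    nbrF G v ⊆ X := by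
  intro u hu
  rw [mem_nbrF] at hu
  rcases hbip.2.2 v u hu with ⟨h1, h2⟩ | ⟨h1, h2⟩
  · exact absurd h1 (Finset.disjoint_right.1 hbip.1 hv)
  · exact h2

lemma split_S {X Y : Finset V} (hU : X ∪ Y = Finset.univ) (S : Finset V) :
    (S ∩ X) ∪ (S ∩ Y) = S := by
  rw [← Finset.inter_union_distrib_left, hU, Finset.inter_univ]

lemma degIn_compl {Y : Finset V} {v : V} (h : nbrF G v ⊆ Y) (B : Finset V) :
    degIn G v (Y \ B) = (nbrF G v).card - degIn G v B := by
  have heq : nbrF G v ∩ (Y \ B) = nbrF G v \ B := by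
    ext u
    simp only [Finset.mem_inter, Finset.mem_sdiff]
    exact ⟨fun hu => ⟨hu.1, hu.2.2⟩, fun hu => ⟨hu.1, h hu.1, hu.2⟩⟩
  have h2 : degIn G v (Y \ B) = (nbrF G v ∩ (Y \ B)).card := rfl
  rw [h2, heq, card_sdiff_eq]

lemma cut_split {X Y : Finset V} {d : ℕ} (hbip : IsBipartiteWith G X Y)
    (hreg : IsRegularDeg G d) (S : Finset V) :
    cutVal G S = (∑ x ∈ S ∩ X, (d - degIn G x (S ∩ Y)))
      + ∑ y ∈ S ∩ Y, (d - degIn G y (S ∩ X)) := by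
  have hdisj : Disjoint (S ∩ X) (S ∩ Y) :=
    hbip.1.mono Finset.inter_subset_right Finset.inter_subset_right
  have hmain : cutVal G S = ∑ u ∈ (S ∩ X) ∪ (S ∩ Y), (nbrF G u \ S).card := by
    unfold cutVal
    rw [split_S hbip.2.1]
  rw [hmain, Finset.sum_union hdisj]
  congr 1
  · refine Finset.sum_congr rfl fun x hx => ?_
    have hsub : nbrF G x ⊆ Y := bip_nbr G hbip (Finset.mem_inter.1 hx).2
    have heq : nbrF G x \ S = nbrF G x \ (S ∩ Y) := by
      ext u
      simp only [Finset.mem_sdiff, Finset.mem_inter]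
      exact ⟨fun hu => ⟨hu.1, fun hc => hu.2 hc.1⟩, fun hu => ⟨hu.1, fun hc => hu.2 ⟨hc, hsub hu.1⟩⟩⟩
    rw [heq, card_sdiff_eq, hreg x]
  · refine Finset.sum_congr rfl fun y hy => ?_
    have hsub : nbrF G y ⊆ X := bip_nbr' G hbip (Finset.mem_inter.1 hy).2
    have heq : nbrF G y \ S = nbrF G y \ (S ∩ X) := by
      ext u
      simp only [Finset.mem_sdiff, Finset.mem_inter]
      exact ⟨fun hu => ⟨hu.1, fun hc => hu.2 hc.1⟩, fun hu => ⟨hu.1, fun hc => hu.2 ⟨hc, hsub hu.1⟩⟩⟩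
    rw [heq, card_sdiff_eq, hreg y]

lemma sum_out {Q : Finset V} {d : ℕ} (hreg : IsRegularDeg G d)
    (A B : Finset V) (hnbr : ∀ x ∈ A, nbrF G x ⊆ Q) :
    ∑ y ∈ Q \ B, degIn G y A = ∑ x ∈ A, (d - degIn G x B) := by
  rw [sum_degIn_comm]
  refine Finset.sum_congr rfl fun x hx => ?_
  rw [degIn_compl G (hnbr x hx), hreg x]

end Bip


section Refine
variable {V : Type*} [Fintype V] [DecidableEq V] (G : SimpleGraph V)

/-- majority refinement: vertices of `Xside` with more than half their
neighbours in `Q`. -/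
def refSet (G : SimpleGraph V) [Fintype V] [DecidableEq V] (d : ℕ) (Xside Q : Finset V) : Finset V :=
  Xside.filter (fun x => d < 2 * degIn G x Q)

lemma bip_symm {X Y : Finset V} (hbip : IsBipartiteWith G X Y) : IsBipartiteWith G Y X :=
  ⟨hbip.1.symm, by rw [Finset.union_comm]; exact hbip.2.1,
   fun u v h => (hbip.2.2 u v h).symm⟩

lemma refine {X Y : Finset V} {d : ℕ} (hbip : IsBipartiteWith G X Y)
    (hreg : IsRegularDeg G d) (S Q : Finset V) :
    d * (((S ∩ X) \ refSet G d X Q ∪ refSet G d X Q \ (S ∩ X)).card) ≤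
      2 * (((S ∩ Y) \ Q ∪ Q \ (S ∩ Y)).card) *
        (((S ∩ X) \ refSet G d X Q ∪ refSet G d X Q \ (S ∩ X)).card)
      + 2 * cutVal G S := by
  set A := S ∩ X with hA
  set B := S ∩ Y with hB
  set R := refSet G d X Q with hR
  set m := (B \ Q ∪ Q \ B).card with hm
  have hmB : (B \ Q).card ≤ m := Finset.card_le_card Finset.subset_union_left
  have hmQ : (Q \ B).card ≤ m := Finset.card_le_card Finset.subset_union_right
  -- side 1
  have h1 : ∀ x ∈ A \ R, d ≤ 2 * m + 2 * (d - degIn G x B) := by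
    intro x hx
    rw [Finset.mem_sdiff] at hx
    have hxX : x ∈ X := (Finset.mem_inter.1 hx.1).2
    have hxR : ¬ (d < 2 * degIn G x Q) := by
      intro hc
      exact hx.2 (Finset.mem_filter.2 ⟨hxX, hc⟩)
    have hdQ : 2 * degIn G x Q ≤ d := Nat.le_of_not_lt hxR
    have hBQ : degIn G x B ≤ degIn G x Q + (B \ Q).card := degIn_le_degIn_add G x B Q
    have hBd : degIn G x B ≤ d := by
      have := degIn_le G x B; rw [hreg x] at this; exact this
    omega
  have hsum1 : d * (A \ R).card ≤ 2 * m * (A \ R).card + 2 * ∑ x ∈ A, (d - degIn G x B) := by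
    calc d * (A \ R).card = ∑ _x ∈ A \ R, d := by rw [Finset.sum_const, smul_eq_mul, mul_comm]
      _ ≤ ∑ x ∈ A \ R, (2 * m + 2 * (d - degIn G x B)) := Finset.sum_le_sum (h1)
      _ = 2 * m * (A \ R).card + 2 * ∑ x ∈ A \ R, (d - degIn G x B) := by
          rw [Finset.sum_add_distrib, Finset.sum_const, smul_eq_mul, Finset.mul_sum, mul_comm ((A\R).card)]
      _ ≤ 2 * m * (A \ R).card + 2 * ∑ x ∈ A, (d - degIn G x B) := by
          have h := Finset.sum_le_sum_of_subset (f := fun x => d - degIn G x B)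
            (Finset.sdiff_subset : A \ R ⊆ A)
          exact Nat.add_le_add_left (Nat.mul_le_mul_left 2 h) _
  -- side 2
  have h2 : ∀ x ∈ R \ A, d ≤ 2 * m + 2 * degIn G x B := by
    intro x hx
    rw [Finset.mem_sdiff] at hx
    have hxR := Finset.mem_filter.1 hx.1
    have hQB : degIn G x Q ≤ degIn G x B + (Q \ B).card := degIn_le_degIn_add G x Q B
    omega
  have hRX : R \ A ⊆ X \ A := by
    intro x hx
    rw [Finset.mem_sdiff] at hx ⊢
    exact ⟨(Finset.mem_filter.1 hx.1).1, hx.2⟩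
  have hsum2 : d * (R \ A).card ≤ 2 * m * (R \ A).card + 2 * ∑ y ∈ B, (d - degIn G y A) := by
    have hout : ∑ x ∈ X \ A, degIn G x B = ∑ y ∈ B, (d - degIn G y A) := by
      refine sum_out G hreg B A (fun y hy => ?_)
      exact bip_nbr' G hbip (Finset.mem_inter.1 ((hB ▸ hy : y ∈ S ∩ Y))).2
    calc d * (R \ A).card = ∑ _x ∈ R \ A, d := by rw [Finset.sum_const, smul_eq_mul, mul_comm]
      _ ≤ ∑ x ∈ R \ A, (2 * m + 2 * degIn G x B) := Finset.sum_le_sum h2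
      _ = 2 * m * (R \ A).card + 2 * ∑ x ∈ R \ A, degIn G x B := by
          rw [Finset.sum_add_distrib, Finset.sum_const, smul_eq_mul, Finset.mul_sum, mul_comm ((R\A).card)]
      _ ≤ 2 * m * (R \ A).card + 2 * ∑ x ∈ X \ A, degIn G x B := by
          have h := Finset.sum_le_sum_of_subset (f := fun x => degIn G x B) hRX
          exact Nat.add_le_add_left (Nat.mul_le_mul_left 2 h) _
      _ = 2 * m * (R \ A).card + 2 * ∑ y ∈ B, (d - degIn G y A) := by rw [hout]
  have hcard : (A \ R ∪ R \ A).card = (A \ R).card + (R \ A).card :=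
    Finset.card_union_of_disjoint (disjoint_sdiff_sdiff)
  have hcut := cut_split G hbip hreg S
  rw [← hA, ← hB] at hcut
  rw [hcard, Nat.mul_add, Nat.mul_add]
  have hadd := Nat.add_le_add hsum1 hsum2
  omega

end Refine


section Sampling
variable {V : Type*} [Fintype V] [DecidableEq V]

lemma pi_sum_single {s : ℕ} (P : Finset V) (φ : V → ℝ) (u : Fin s) :
    ∑ f ∈ Fintype.piFinset (fun _ : Fin s => P), φ (f u)
      = (P.card : ℝ) ^ (s - 1) * ∑ x ∈ P, φ x := by
  set F : Fin s → V → ℝ := fun k x => if k = u then φ x else 1 with hF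
  have h1 : ∀ f : Fin s → V, φ (f u) = ∏ k, F k (f k) := by
    intro f
    rw [← Finset.mul_prod_erase Finset.univ _ (Finset.mem_univ u)]
    rw [Finset.prod_eq_one (fun k hk => by
      simp only [hF, if_neg (Finset.mem_erase.1 hk).1])]
    simp [hF]
  rw [Finset.sum_congr rfl (fun f _ => h1 f), ← Finset.prod_univ_sum]
  rw [← Finset.mul_prod_erase Finset.univ _ (Finset.mem_univ u)]
  have hrest : ∀ k ∈ Finset.univ.erase u, (∑ x ∈ P, F k x) = (P.card : ℝ) := by
    intro k hk
    simp only [hF, if_neg (Finset.mem_erase.1 hk).1]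
    simp
  rw [Finset.prod_congr rfl hrest, Finset.prod_const,
    Finset.card_erase_of_mem (Finset.mem_univ u)]
  have hu : (∑ x ∈ P, F u x) = ∑ x ∈ P, φ x := by
    refine Finset.sum_congr rfl fun x _ => ?_
    simp [hF]
  rw [hu, Finset.card_univ, Fintype.card_fin]
  ring

lemma pi_sum_pair {s : ℕ} (P : Finset V) (φ ψ : V → ℝ) (u v : Fin s) (huv : u ≠ v)
    (hφ : ∑ x ∈ P, φ x = 0) :
    ∑ f ∈ Fintype.piFinset (fun _ : Fin s => P), φ (f u) * ψ (f v) = 0 := by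
  set F : Fin s → V → ℝ := fun k x => if k = u then φ x else if k = v then ψ x else 1 with hF
  have h1 : ∀ f : Fin s → V, φ (f u) * ψ (f v) = ∏ k, F k (f k) := by
    intro f
    rw [← Finset.mul_prod_erase Finset.univ _ (Finset.mem_univ u)]
    have hvmem : v ∈ Finset.univ.erase u :=
      Finset.mem_erase.2 ⟨fun h => huv h.symm, Finset.mem_univ v⟩
    rw [← Finset.mul_prod_erase _ _ hvmem]
    rw [Finset.prod_eq_one (fun k hk => by
      have hk1 := Finset.mem_erase.1 hk
      have hk2 := Finset.mem_erase.1 hk1.2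
      simp only [hF, if_neg hk2.1, if_neg hk1.1])]
    simp [hF, Ne.symm huv]
  rw [Finset.sum_congr rfl (fun f _ => h1 f), ← Finset.prod_univ_sum]
  refine Finset.prod_eq_zero (Finset.mem_univ u) ?_
  have : (∑ x ∈ P, F u x) = ∑ x ∈ P, φ x := by
    refine Finset.sum_congr rfl fun x _ => ?_
    simp [hF]
  rw [this, hφ]

lemma pi_variance {s : ℕ} (P W : Finset V) (hW : W ⊆ P) :
    ∑ f ∈ Fintype.piFinset (fun _ : Fin s => P),
      ((P.card : ℝ) * ((Finset.univ.filter (fun i => f i ∈ W)).card : ℝ)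
        - (s : ℝ) * (W.card : ℝ))^2
      ≤ (s : ℝ) * (P.card : ℝ) ^ (s - 1) * (P.card : ℝ)^3 / 4 := by
  set n : ℝ := (P.card : ℝ) with hn
  set q : ℝ := (W.card : ℝ) with hq
  set h : V → ℝ := fun x => n * (if x ∈ W then 1 else 0) - q with hh
  have hq0 : 0 ≤ q := Nat.cast_nonneg _
  have hn0 : 0 ≤ n := Nat.cast_nonneg _
  have hqn : q ≤ n := by
    rw [hn, hq]
    exact_mod_cast Finset.card_le_card hW
  have hTf : ∀ f : Fin s → V,
      n * ((Finset.univ.filter (fun i => f i ∈ W)).card : ℝ) - (s:ℝ) * q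
        = ∑ i : Fin s, h (f i) := by
    intro f
    have e : ∑ i : Fin s, h (f i)
        = n * (∑ i : Fin s, (if f i ∈ W then (1:ℝ) else 0)) - (s:ℝ) * q := by
      simp only [hh]
      rw [Finset.sum_sub_distrib, ← Finset.mul_sum, Finset.sum_const]
      simp [Finset.card_univ]
    rw [e, Finset.sum_boole]
  have hsum0 : ∑ x ∈ P, h x = 0 := by
    simp only [hh]
    rw [Finset.sum_sub_distrib, ← Finset.mul_sum, Finset.sum_boole, Finset.sum_const]
    rw [Finset.filter_mem_eq_inter, Finset.inter_eq_right.2 hW]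
    simp [hq, mul_comm]
    rw [hn]; ring
  have hsq : ∑ x ∈ P, h x * h x ≤ n^3 / 4 := by
    have hsplit : P = W ∪ (P \ W) := (Finset.union_sdiff_of_subset hW).symm
    rw [hsplit, Finset.sum_union Finset.disjoint_sdiff]
    have e1 : ∑ x ∈ W, h x * h x = q * ((n - q) * (n - q)) := by
      rw [Finset.sum_congr rfl (fun x hx => by simp only [hh, if_pos hx, mul_one] :
        ∀ x ∈ W, h x * h x = (n - q) * (n - q))]
      rw [Finset.sum_const, nsmul_eq_mul, ← hq]
    have e2 : ∑ x ∈ P \ W, h x * h x = (n - q) * (q * q) := by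
      rw [Finset.sum_congr rfl (fun x hx => by
        simp only [hh, if_neg (Finset.mem_sdiff.1 hx).2, mul_zero, zero_sub, neg_mul,
          mul_neg, neg_neg] :
        ∀ x ∈ P \ W, h x * h x = q * q)]
      rw [Finset.sum_const, nsmul_eq_mul, Finset.card_sdiff_of_subset hW,
        Nat.cast_sub (Finset.card_le_card hW), ← hn, ← hq]
    rw [e1, e2]
    nlinarith [sq_nonneg (n - 2*q), mul_nonneg hq0 (sub_nonneg.2 hqn)]
  have key : ∑ f ∈ Fintype.piFinset (fun _ : Fin s => P),
      ((n * ((Finset.univ.filter (fun i => f i ∈ W)).card : ℝ) - (s:ℝ) * q))^2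
      = (s : ℝ) * (n ^ (s - 1) * ∑ x ∈ P, h x * h x) := by
    have step1 : ∀ f : Fin s → V,
        ((n * ((Finset.univ.filter (fun i => f i ∈ W)).card : ℝ) - (s:ℝ) * q))^2
        = ∑ u : Fin s, ∑ v : Fin s, h (f u) * h (f v) := by
      intro f
      rw [hTf f, sq, Finset.sum_mul_sum]
    rw [Finset.sum_congr rfl (fun f _ => step1 f)]
    rw [Finset.sum_comm]
    have inner : ∀ u : Fin s,
        (∑ f ∈ Fintype.piFinset (fun _ : Fin s => P), ∑ v : Fin s, h (f u) * h (f v))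
        = n ^ (s - 1) * ∑ x ∈ P, h x * h x := by
      intro u
      rw [Finset.sum_comm]
      rw [Finset.sum_eq_single u]
      · exact pi_sum_single P (fun x => h x * h x) u
      · intro v _ hvu
        exact pi_sum_pair P h h u v (Ne.symm hvu) hsum0
      · intro hu; exact absurd (Finset.mem_univ u) hu
    rw [Finset.sum_congr rfl (fun u _ => inner u), Finset.sum_const, Finset.card_univ,
      Fintype.card_fin, nsmul_eq_mul]
  rw [key]
  have hpow : (0:ℝ) ≤ n ^ (s-1) := pow_nonneg hn0 _
  have hs0 : (0:ℝ) ≤ (s:ℝ) := Nat.cast_nonneg _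
  calc (s : ℝ) * (n ^ (s - 1) * ∑ x ∈ P, h x * h x)
      ≤ (s : ℝ) * (n ^ (s - 1) * (n^3/4)) := by
        apply mul_le_mul_of_nonneg_left _ hs0
        exact mul_le_mul_of_nonneg_left hsq hpow
    _ = (s : ℝ) * n ^ (s - 1) * n^3 / 4 := by ring

end Sampling


section Coarse
variable {V : Type*} [Fintype V] [DecidableEq V]

/-- count of positively-labelled seed coordinates adjacent to `y` -/
def seedCount (G : SimpleGraph V) [Fintype V] [DecidableEq V] {s : ℕ}
    (g : Fin s → V × Bool) (y : V) : ℕ :=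
  (Finset.univ.filter (fun i : Fin s => ((g i).2 = true) ∧ (g i).1 ∈ nbrF G y)).card

/-- coarse candidate set built from a labelled seed -/
def seedSet (G : SimpleGraph V) [Fintype V] [DecidableEq V] {s : ℕ} (n d : ℕ)
    (Qside : Finset V) (g : Fin s → V × Bool) : Finset V :=
  Qside.filter (fun y => s * d < 2 * n * seedCount G g y)

set_option maxHeartbeats 1000000 in
lemma coarse {s : ℕ} (G : SimpleGraph V) {d n : ℕ} (hreg : IsRegularDeg G d)
    (P Q A B : Finset V) (hA : A ⊆ P) (hB : B ⊆ Q) (hQP : ∀ y ∈ Q, nbrF G y ⊆ P)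
    (hP : P.card = n) (hQ : Q.card ≤ n) (hn : 0 < n) (hd : 0 < d) (hs : 0 < s) :
    ∃ g : Fin s → V × Bool,
      (((B \ seedSet G n d Q g ∪ seedSet G n d Q g \ B).card : ℝ)) * d ≤
        4 * (∑ y ∈ B, ((d:ℝ) - (degIn G y A : ℝ)))
        + 4 * (∑ y ∈ Q \ B, (degIn G y A : ℝ))
        + 4 * (n:ℝ)^3 / ((s:ℝ) * d) := by
  classical
  set piF := Fintype.piFinset (fun _ : Fin s => P) with hpiF
  set cnt : (Fin s → V) → V → ℕ :=
    fun f y => (Finset.univ.filter (fun i => f i ∈ nbrF G y ∩ A)).card with hcnt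
  set mis : (Fin s → V) → V → Prop := fun f y =>
    (2 * n * (cnt f y) ≤ s * d ∧ 3 * d ≤ 4 * degIn G y A) ∨
    (s * d < 2 * n * (cnt f y) ∧ 4 * degIn G y A ≤ d) with hmis
  have hdR : (0:ℝ) < (d:ℝ) := by exact_mod_cast hd
  have hsR : (0:ℝ) < (s:ℝ) := by exact_mod_cast hs
  have hnR : (0:ℝ) < (n:ℝ) := by exact_mod_cast hn
  -- Step A : Chebyshev for each y
  have stepA : ∀ y ∈ Q,
      ((piF.filter (fun f => mis f y)).card : ℝ) * ((s:ℝ)^2 * (d:ℝ)^2 / 16)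
        ≤ (s:ℝ) * (n:ℝ)^(s-1) * (n:ℝ)^3 / 4 := by
    intro y hy
    set W := nbrF G y ∩ A with hW
    have hWP : W ⊆ P := Finset.Subset.trans Finset.inter_subset_left (hQP y hy)
    have hdeg : degIn G y A = W.card := rfl
    have hsql : ∀ f ∈ piF.filter (fun f => mis f y),
        (s:ℝ)^2 * (d:ℝ)^2 / 16 ≤
          ((n:ℝ) * ((Finset.univ.filter (fun i => f i ∈ W)).card : ℝ)
            - (s:ℝ) * (W.card : ℝ))^2 := by
      intro f hf
      have hmf : mis f y := (Finset.mem_filter.1 hf).2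
      have hcf : (cnt f y : ℝ) = ((Finset.univ.filter (fun i => f i ∈ W)).card : ℝ) := by
        norm_cast
      rcases hmf with ⟨h1, h2⟩ | ⟨h1, h2⟩
      · have h1R : 2 * (n:ℝ) * ((cnt f y : ℕ) : ℝ) ≤ (s:ℝ) * d := by exact_mod_cast h1
        have h2R : 3 * (d:ℝ) ≤ 4 * (degIn G y A : ℝ) := by exact_mod_cast h2
        rw [hcf] at h1R
        rw [hdeg] at h2R
        have hgap : (s:ℝ) * (d:ℝ) / 4
            ≤ (s:ℝ) * (W.card : ℝ)
              - (n:ℝ) * ((Finset.univ.filter (fun i => f i ∈ W)).card : ℝ) := by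
          nlinarith [hsR.le, hdR.le]
        have hnn : (0:ℝ) ≤ (s:ℝ) * (d:ℝ) / 4 := by positivity
        nlinarith [hgap, hnn]
      · have h1R : (s:ℝ) * d < 2 * (n:ℝ) * ((cnt f y : ℕ) : ℝ) := by exact_mod_cast h1
        have h2R : 4 * (degIn G y A : ℝ) ≤ (d:ℝ) := by exact_mod_cast h2
        rw [hcf] at h1R
        rw [hdeg] at h2R
        have hgap : (s:ℝ) * (d:ℝ) / 4
            ≤ (n:ℝ) * ((Finset.univ.filter (fun i => f i ∈ W)).card : ℝ)
              - (s:ℝ) * (W.card : ℝ) := by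
          nlinarith [hsR.le, hdR.le]
        have hnn : (0:ℝ) ≤ (s:ℝ) * (d:ℝ) / 4 := by positivity
        nlinarith [hgap, hnn]
    have hvar := pi_variance (s := s) P W hWP
    rw [hP] at hvar
    calc ((piF.filter (fun f => mis f y)).card : ℝ) * ((s:ℝ)^2 * (d:ℝ)^2 / 16)
        = ∑ _f ∈ piF.filter (fun f => mis f y), ((s:ℝ)^2 * (d:ℝ)^2 / 16) := by
          rw [Finset.sum_const, nsmul_eq_mul]
      _ ≤ ∑ f ∈ piF.filter (fun f => mis f y),
            ((n:ℝ) * ((Finset.univ.filter (fun i => f i ∈ W)).card : ℝ)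
              - (s:ℝ) * (W.card : ℝ))^2 := Finset.sum_le_sum hsql
      _ ≤ ∑ f ∈ piF,
            ((n:ℝ) * ((Finset.univ.filter (fun i => f i ∈ W)).card : ℝ)
              - (s:ℝ) * (W.card : ℝ))^2 := by
          apply Finset.sum_le_sum_of_subset_of_nonneg (Finset.filter_subset _ _)
          intro f _ _
          positivity
      _ ≤ (s:ℝ) * (n:ℝ)^(s-1) * (n:ℝ)^3 / 4 := hvar
  -- Step B : total over seeds
  have stepB : ∑ f ∈ piF, (((Q.filter (fun y => mis f y)).card : ℝ))
      ≤ (n:ℝ) * (4 * (n:ℝ)^(s-1) * (n:ℝ)^3 / ((s:ℝ) * (d:ℝ)^2)) := by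
    have hswap : ∑ f ∈ piF, (((Q.filter (fun y => mis f y)).card : ℝ))
        = ∑ y ∈ Q, (((piF.filter (fun f => mis f y)).card : ℝ)) := by
      simp only [Finset.card_filter]
      push_cast
      rw [Finset.sum_comm]
    rw [hswap]
    have hone : ∀ y ∈ Q, ((piF.filter (fun f => mis f y)).card : ℝ)
        ≤ 4 * (n:ℝ)^(s-1) * (n:ℝ)^3 / ((s:ℝ) * (d:ℝ)^2) := by
      intro y hy
      have h := stepA y hy
      rw [le_div_iff₀ (by positivity : (0:ℝ) < (s:ℝ) * (d:ℝ)^2)]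
      nlinarith [h, hsR, hdR, hnR]
    calc ∑ y ∈ Q, (((piF.filter (fun f => mis f y)).card : ℝ))
        ≤ ∑ _y ∈ Q, (4 * (n:ℝ)^(s-1) * (n:ℝ)^3 / ((s:ℝ) * (d:ℝ)^2)) :=
          Finset.sum_le_sum hone
      _ = (Q.card : ℝ) * (4 * (n:ℝ)^(s-1) * (n:ℝ)^3 / ((s:ℝ) * (d:ℝ)^2)) := by
          rw [Finset.sum_const, nsmul_eq_mul]
      _ ≤ (n:ℝ) * (4 * (n:ℝ)^(s-1) * (n:ℝ)^3 / ((s:ℝ) * (d:ℝ)^2)) := by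
          apply mul_le_mul_of_nonneg_right _ (by positivity)
          exact_mod_cast hQ
  -- Step C : pigeonhole
  have hPne : P.Nonempty := Finset.card_pos.1 (by omega)
  have hpiFne : piF.Nonempty := by
    obtain ⟨x, hx⟩ := hPne
    exact ⟨fun _ => x, Fintype.mem_piFinset.2 fun _ => hx⟩
  have hpiFcard : (piF.card : ℝ) = (n:ℝ)^s := by
    rw [hpiF, Fintype.card_piFinset]
    simp [hP]
  have stepC : ∃ f ∈ piF, ((Q.filter (fun y => mis f y)).card : ℝ)
      ≤ 4 * (n:ℝ)^3 / ((s:ℝ) * (d:ℝ)^2) := by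
    apply Finset.exists_le_of_sum_le hpiFne
    calc ∑ f ∈ piF, (((Q.filter (fun y => mis f y)).card : ℝ))
        ≤ (n:ℝ) * (4 * (n:ℝ)^(s-1) * (n:ℝ)^3 / ((s:ℝ) * (d:ℝ)^2)) := stepB
      _ = (n:ℝ)^s * (4 * (n:ℝ)^3 / ((s:ℝ) * (d:ℝ)^2)) := by
          have hpow : (n:ℝ) * (n:ℝ)^(s-1) = (n:ℝ)^s := by
            rw [← pow_succ']
            congr 1
            omega
          rw [← hpow]
          ring
      _ = ∑ _f ∈ piF, (4 * (n:ℝ)^3 / ((s:ℝ) * (d:ℝ)^2)) := by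
          rw [Finset.sum_const, nsmul_eq_mul, hpiFcard]
  obtain ⟨f, hfpi, hfmis⟩ := stepC
  -- Step D : assemble
  refine ⟨fun i => (f i, decide (f i ∈ A)), ?_⟩
  set g : Fin s → V × Bool := fun i => (f i, decide (f i ∈ A)) with hg
  have hcount : ∀ y : V, seedCount G g y = cnt f y := by
    intro y
    unfold seedCount
    rw [hcnt]
    congr 1
    apply Finset.filter_congr
    intro i _
    simp [hg, Finset.mem_inter, decide_eq_true_eq, and_comm]
  set Qc := seedSet G n d Q g with hQc
  set DB := B.filter (fun y => 4 * degIn G y A < 3 * d) with hDB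
  set DQ := (Q \ B).filter (fun y => d < 4 * degIn G y A) with hDQ
  set Mf := Q.filter (fun y => mis f y) with hMf
  have hdecomp : B \ Qc ∪ Qc \ B ⊆ DB ∪ DQ ∪ Mf := by
    intro y hy
    rw [Finset.mem_union, Finset.mem_sdiff, Finset.mem_sdiff] at hy
    rw [Finset.mem_union, Finset.mem_union]
    rcases hy with ⟨hyB, hyQc⟩ | ⟨hyQc, hyB⟩
    · have hyQ : y ∈ Q := hB hyB
      have hnot : ¬ (s * d < 2 * n * seedCount G g y) := by
        intro hcond
        exact hyQc (Finset.mem_filter.2 ⟨hyQ, hcond⟩)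
      rw [hcount y] at hnot
      by_cases hq : 3 * d ≤ 4 * degIn G y A
      · exact Or.inr (Finset.mem_filter.2 ⟨hyQ, Or.inl ⟨Nat.le_of_not_lt hnot, hq⟩⟩)
      · exact Or.inl (Or.inl (Finset.mem_filter.2 ⟨hyB, Nat.lt_of_not_le hq⟩))
    · have hyQ : y ∈ Q := (Finset.mem_filter.1 hyQc).1
      have hcond : s * d < 2 * n * seedCount G g y := (Finset.mem_filter.1 hyQc).2
      rw [hcount y] at hcond
      by_cases hq : 4 * degIn G y A ≤ d
      · exact Or.inr (Finset.mem_filter.2 ⟨hyQ, Or.inr ⟨hcond, hq⟩⟩)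
      · exact Or.inl (Or.inr (Finset.mem_filter.2 ⟨Finset.mem_sdiff.2 ⟨hyQ, hyB⟩,
          Nat.lt_of_not_le hq⟩))
  have hqd : ∀ y, degIn G y A ≤ d := by
    intro y
    have := degIn_le G y A
    rwa [hreg y] at this
  have hDBbound : d * DB.card ≤ 4 * ∑ y ∈ B, (d - degIn G y A) := by
    calc d * DB.card = ∑ _y ∈ DB, d := by rw [Finset.sum_const, smul_eq_mul, mul_comm]
      _ ≤ ∑ y ∈ DB, 4 * (d - degIn G y A) := by
          apply Finset.sum_le_sum
          intro y hy
          have h4 := (Finset.mem_filter.1 hy).2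
          have := hqd y
          omega
      _ ≤ ∑ y ∈ B, 4 * (d - degIn G y A) := by
          apply Finset.sum_le_sum_of_subset (Finset.filter_subset _ _)
      _ = 4 * ∑ y ∈ B, (d - degIn G y A) := by rw [Finset.mul_sum]
  have hDQbound : d * DQ.card ≤ 4 * ∑ y ∈ Q \ B, degIn G y A := by
    calc d * DQ.card = ∑ _y ∈ DQ, d := by rw [Finset.sum_const, smul_eq_mul, mul_comm]
      _ ≤ ∑ y ∈ DQ, 4 * degIn G y A := by
          apply Finset.sum_le_sum
          intro y hy
          have h4 := (Finset.mem_filter.1 hy).2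
          omega
      _ ≤ ∑ y ∈ Q \ B, 4 * degIn G y A := by
          apply Finset.sum_le_sum_of_subset (Finset.filter_subset _ _)
      _ = 4 * ∑ y ∈ Q \ B, degIn G y A := by rw [Finset.mul_sum]
  have hcards : ((B \ Qc ∪ Qc \ B).card : ℝ) ≤ (DB.card : ℝ) + DQ.card + Mf.card := by
    have h1 : (B \ Qc ∪ Qc \ B).card ≤ (DB ∪ DQ ∪ Mf).card := Finset.card_le_card hdecomp
    have h2 : (DB ∪ DQ ∪ Mf).card ≤ DB.card + DQ.card + Mf.card := by
      calc (DB ∪ DQ ∪ Mf).card ≤ (DB ∪ DQ).card + Mf.card := Finset.card_union_le _ _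
        _ ≤ DB.card + DQ.card + Mf.card := by
            have := Finset.card_union_le DB DQ
            omega
    exact_mod_cast le_trans h1 h2
  -- cast the ℕ sums
  have hcast1 : ((∑ y ∈ B, (d - degIn G y A) : ℕ) : ℝ)
      = ∑ y ∈ B, ((d:ℝ) - (degIn G y A : ℝ)) := by
    rw [Nat.cast_sum]
    refine Finset.sum_congr rfl fun y _ => ?_
    rw [Nat.cast_sub (hqd y)]
  have hDBR : (DB.card : ℝ) * d ≤ 4 * ∑ y ∈ B, ((d:ℝ) - (degIn G y A : ℝ)) := by
    rw [← hcast1, mul_comm]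
    calc (d:ℝ) * DB.card = ((d * DB.card : ℕ) : ℝ) := by push_cast; ring
      _ ≤ ((4 * ∑ y ∈ B, (d - degIn G y A) : ℕ) : ℝ) := Nat.cast_le.2 hDBbound
      _ = 4 * ((∑ y ∈ B, (d - degIn G y A) : ℕ) : ℝ) := by push_cast; ring
  have hDQR : (DQ.card : ℝ) * d ≤ 4 * ∑ y ∈ Q \ B, ((degIn G y A : ℝ)) := by
    rw [mul_comm]
    calc (d:ℝ) * DQ.card = ((d * DQ.card : ℕ) : ℝ) := by push_cast; ring
      _ ≤ ((4 * ∑ y ∈ Q \ B, degIn G y A : ℕ) : ℝ) := Nat.cast_le.2 hDQbound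
      _ = 4 * ∑ y ∈ Q \ B, ((degIn G y A : ℝ)) := by push_cast; ring
  have hMfR : (Mf.card : ℝ) * d ≤ 4 * (n:ℝ)^3 / ((s:ℝ) * d) := by
    have h1 : (Mf.card : ℝ) ≤ 4 * (n:ℝ)^3 / ((s:ℝ) * (d:ℝ)^2) := hfmis
    have h2 : 4 * (n:ℝ)^3 / ((s:ℝ) * (d:ℝ)^2) * d = 4 * (n:ℝ)^3 / ((s:ℝ) * d) := by
      field_simp
    calc (Mf.card : ℝ) * d ≤ 4 * (n:ℝ)^3 / ((s:ℝ) * (d:ℝ)^2) * d :=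
          mul_le_mul_of_nonneg_right h1 hdR.le
      _ = 4 * (n:ℝ)^3 / ((s:ℝ) * d) := h2
  calc ((B \ Qc ∪ Qc \ B).card : ℝ) * d
      ≤ ((DB.card : ℝ) + DQ.card + Mf.card) * d :=
        mul_le_mul_of_nonneg_right hcards hdR.le
    _ = (DB.card : ℝ) * d + (DQ.card : ℝ) * d + (Mf.card : ℝ) * d := by ring
    _ ≤ 4 * (∑ y ∈ B, ((d:ℝ) - (degIn G y A : ℝ)))
        + 4 * (∑ y ∈ Q \ B, (degIn G y A : ℝ)) + 4 * (n:ℝ)^3 / ((s:ℝ) * d) := by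
        linarith [hDBR, hDQR, hMfR]

end Coarse


section Split
variable {V : Type*} [Fintype V] [DecidableEq V]

lemma symm_split {X Y : Finset V} (hXY : Disjoint X Y) (hU : X ∪ Y = Finset.univ)
    (S CX CY : Finset V) (hCX : CX ⊆ X) (hCY : CY ⊆ Y) :
    ((S \ (CX ∪ CY)) ∪ ((CX ∪ CY) \ S)).card
      = (((S ∩ X) \ CX) ∪ (CX \ (S ∩ X))).card
        + (((S ∩ Y) \ CY) ∪ (CY \ (S ∩ Y))).card := by
  have hset : (S \ (CX ∪ CY)) ∪ ((CX ∪ CY) \ S)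
      = (((S ∩ X) \ CX) ∪ (CX \ (S ∩ X))) ∪ (((S ∩ Y) \ CY) ∪ (CY \ (S ∩ Y))) := by
    ext u
    have huXY : u ∈ X ∨ u ∈ Y := by
      have h : u ∈ X ∪ Y := by rw [hU]; exact Finset.mem_univ u
      exact Finset.mem_union.1 h
    by_cases huX : u ∈ X
    · have huY : u ∉ Y := Finset.disjoint_left.1 hXY huX
      have huCY : u ∉ CY := fun h => huY (hCY h)
      simp only [Finset.mem_union, Finset.mem_sdiff, Finset.mem_inter]
      tauto
    · have huY : u ∈ Y := huXY.resolve_left huX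
      have huCX : u ∉ CX := fun h => huX (hCX h)
      simp only [Finset.mem_union, Finset.mem_sdiff, Finset.mem_inter]
      tauto
  rw [hset]
  apply Finset.card_union_of_disjoint
  refine Finset.disjoint_left.2 fun u hu1 hu2 => ?_
  have h1 : u ∈ X := by
    rcases Finset.mem_union.1 hu1 with h | h
    · exact (Finset.mem_inter.1 (Finset.mem_sdiff.1 h).1).2
    · exact hCX (Finset.mem_sdiff.1 h).1
  have h2 : u ∈ Y := by
    rcases Finset.mem_union.1 hu2 with h | h
    · exact (Finset.mem_inter.1 (Finset.mem_sdiff.1 h).1).2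
    · exact hCY (Finset.mem_sdiff.1 h).1
  exact Finset.disjoint_left.1 hXY h1 h2

lemma cutVal_empty (G : SimpleGraph V) : cutVal G (∅ : Finset V) = 0 := by
  simp [cutVal]

end Split


section Cover
variable {V : Type*} [Fintype V] [DecidableEq V]

lemma cover_pair {X Y : Finset V} {d : ℕ} (G : SimpleGraph V) (hbip : IsBipartiteWith G X Y)
    (hreg : IsRegularDeg G d) (S CX CY : Finset V) (hCX : CX ⊆ X) (hCY : CY ⊆ Y) :
    (((S \ (CX ∪ CY)) ∪ ((CX ∪ CY) \ S)).card : ℝ)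
      = (((S ∩ X) \ CX ∪ CX \ (S ∩ X)).card : ℝ)
        + (((S ∩ Y) \ CY ∪ CY \ (S ∩ Y)).card : ℝ) ∧
    ((cutVal G (CX ∪ CY) : ℕ) : ℝ) ≤ ((cutVal G S : ℕ) : ℝ)
        + (d:ℝ) * (((S \ (CX ∪ CY)) ∪ ((CX ∪ CY) \ S)).card : ℝ) := by
  constructor
  · exact_mod_cast symm_split hbip.1 hbip.2.1 S CX CY hCX hCY
  · have h := cutVal_move G hreg (((S \ (CX ∪ CY)) ∪ ((CX ∪ CY) \ S)).card) S (CX ∪ CY) rfl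
    exact_mod_cast h

end Cover

end Stmt4Aux

open Stmt4Aux in
set_option maxHeartbeats 2000000 in
/-- for each `δ ∈ (0,1)` there is `K = K(δ)` such that any
`⌊δn⌋`-regular bipartite graph on `2n` vertices admits a family `𝒞` of at most
`n^K` cuts such that every cut `S` with `|∇(S)| ≤ td` (`t ≥ 1` real) has some
`C ∈ 𝒞` with `|S △ C| ≤ 32t` and `|∇(C)| ≤ 33td`. -/
theorem stmt_4 (δ : ℝ) (hδ : δ ∈ Set.Ioo (0:ℝ) 1) :
    ∃ K : ℕ, ∀ (V : Type) [Fintype V] [DecidableEq V] (G : SimpleGraph V)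
      (X Y : Finset V) (n d : ℕ),
      2 ≤ n → d = ⌊δ * (n : ℝ)⌋₊ → 1 ≤ d →
      X.card = n → Y.card = n → IsBipartiteWith G X Y → IsRegularDeg G d →
      ∃ 𝒞 : Finset (Finset V), 𝒞.card ≤ n ^ K ∧
        ∀ t : ℝ, 1 ≤ t → ∀ S : Finset V, (cutVal G S : ℝ) ≤ t * d →
          ∃ C ∈ 𝒞, (((S \ C) ∪ (C \ S)).card : ℝ) ≤ 32 * t ∧
            (cutVal G C : ℝ) ≤ 33 * t * d := by
  obtain ⟨hδ0, hδ1⟩ := hδ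
  set s : ℕ := max 1 ⌈(1024:ℝ)/δ^3⌉₊ with hs_def
  set n₀ : ℕ := max 2 ⌈(4:ℝ)/δ⌉₊ with hn0_def
  refine ⟨6*s + 2 + 2*n₀, ?_⟩
  intro V _ _ G X Y n d hn2 hdfl hd1 hX hY hbip hreg
  have hs1 : 1 ≤ s := le_max_left _ _
  have hn1 : 1 ≤ n := by omega
  have hV : (Finset.univ : Finset V).card = 2 * n := by
    rw [← hbip.2.1, Finset.card_union_of_disjoint hbip.1, hX, hY]
    ring
  by_cases hsmall : n ≤ n₀
  · -- small n : take the full powerset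
    refine ⟨(Finset.univ : Finset V).powerset, ?_, ?_⟩
    · rw [Finset.card_powerset, hV]
      calc 2 ^ (2*n) ≤ n ^ (2*n) := Nat.pow_le_pow_left hn2 _
        _ ≤ n ^ (6*s + 2 + 2*n₀) := Nat.pow_le_pow_right hn1 (by omega)
    · intro t ht S hcut
      refine ⟨S, Finset.mem_powerset.2 (Finset.subset_univ S), ?_, ?_⟩
      · simp only [Finset.sdiff_self, Finset.empty_union, Finset.card_empty]
        norm_num
        linarith
      · have hd0 : (0:ℝ) ≤ (d:ℝ) := Nat.cast_nonneg _
        nlinarith [hcut, ht, hd0]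
  · push_neg at hsmall
    have hnR : (0:ℝ) < (n:ℝ) := by positivity
    have hdR : (0:ℝ) < (d:ℝ) := by exact_mod_cast hd1
    have hn0c : ((4:ℝ)/δ) ≤ (n₀ : ℕ) := by
      calc ((4:ℝ)/δ) ≤ (⌈(4:ℝ)/δ⌉₊ : ℝ) := Nat.le_ceil _
        _ ≤ (n₀ : ℝ) := Nat.cast_le.2 (le_max_right _ _)
    have hnn0 : (n₀:ℝ) < (n:ℝ) := by exact_mod_cast hsmall
    have hδn4 : (4:ℝ) ≤ δ * n := by
      have h1 : (4:ℝ)/δ < n := lt_of_le_of_lt hn0c hnn0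
      rw [div_lt_iff₀ hδ0] at h1
      nlinarith
    have hdub : (d:ℝ) ≤ δ * n := by
      rw [hdfl]
      exact Nat.floor_le (by positivity)
    have hdlb : (3/4:ℝ) * (δ * n) ≤ (d:ℝ) := by
      have h1 : δ * n < (d:ℝ) + 1 := by
        rw [hdfl]
        exact_mod_cast Nat.lt_floor_add_one (δ * n)
      linarith
    have hsRc : (1024:ℝ)/δ^3 ≤ (s:ℝ) := by
      calc (1024:ℝ)/δ^3 ≤ (⌈(1024:ℝ)/δ^3⌉₊ : ℝ) := Nat.le_ceil _
        _ ≤ (s:ℝ) := Nat.cast_le.2 (le_max_right _ _)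
    have hsR0 : (0:ℝ) < (s:ℝ) := by exact_mod_cast hs1
    -- the family
    set I1 : Finset (Finset V) :=
      Finset.univ.image (fun gp : (Fin s → V × Bool) × (Fin s → V × Bool) =>
        seedSet G n d X gp.2 ∪ seedSet G n d Y gp.1) with hI1
    set I2 : Finset (Finset V) :=
      Finset.univ.image (fun gp : (Fin s → V × Bool) × (Fin s → V × Bool) =>
        refSet G d X (seedSet G n d Y gp.1) ∪ refSet G d Y (seedSet G n d X gp.2)) with hI2
    refine ⟨(I1 ∪ I2) ∪ {∅}, ?_, ?_⟩
    · -- cardinality bound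
      have hcardI : (Finset.univ :
          Finset ((Fin s → V × Bool) × (Fin s → V × Bool))).card = (4*n)^s * (4*n)^s := by
        rw [Finset.card_univ, Fintype.card_prod, Fintype.card_fun, Fintype.card_prod,
          Fintype.card_bool]
        have hc : Fintype.card V = 2 * n := by rw [← Finset.card_univ, hV]
        rw [hc, Fintype.card_fin]
        congr 1 <;> · congr 1; ring
      have h4n : (4*n)^s ≤ n^(3*s) := by
        have h0 : 4 ≤ n*n := Nat.mul_le_mul hn2 hn2
        have h1 : 4*n ≤ n^3 := by
          calc 4*n ≤ (n*n)*n := Nat.mul_le_mul_right n h0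
            _ = n^3 := by ring
        calc (4*n)^s ≤ (n^3)^s := Nat.pow_le_pow_left h1 s
          _ = n^(3*s) := by rw [← pow_mul]
      have himg : ∀ F : ((Fin s → V × Bool) × (Fin s → V × Bool)) → Finset V,
          (Finset.univ.image F).card ≤ n^(3*s) * n^(3*s) := by
        intro F
        calc (Finset.univ.image F).card ≤ (Finset.univ :
            Finset ((Fin s → V × Bool) × (Fin s → V × Bool))).card :=
              Finset.card_image_le
          _ = (4*n)^s * (4*n)^s := hcardI
          _ ≤ n^(3*s) * n^(3*s) := Nat.mul_le_mul h4n h4n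
      have hI1c : I1.card ≤ n^(3*s) * n^(3*s) := by rw [hI1]; exact himg _
      have hI2c : I2.card ≤ n^(3*s) * n^(3*s) := by rw [hI2]; exact himg _
      calc ((I1 ∪ I2) ∪ {∅}).card
          ≤ (I1 ∪ I2).card + ({∅} : Finset (Finset V)).card := Finset.card_union_le _ _
        _ ≤ I1.card + I2.card + 1 := by
            have := Finset.card_union_le I1 I2
            simp only [Finset.card_singleton]
            omega
        _ ≤ n^(3*s) * n^(3*s) + n^(3*s) * n^(3*s) + 1 := by omega
        _ ≤ n ^ (6*s+2) := by
            have h1 : n^(3*s) * n^(3*s) = n^(6*s) := by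
              rw [← pow_add]; congr 1; ring
            have h2 : (1:ℕ) ≤ n^(6*s) := Nat.one_le_pow _ _ (by omega)
            have h3 : n^(6*s+2) = n^(6*s) * (n*n) := by rw [pow_add]; ring
            have h4 : 4 ≤ n*n := Nat.mul_le_mul hn2 hn2
            nlinarith [h1, h2, h3, h4]
        _ ≤ n ^ (6*s + 2 + 2*n₀) := Nat.pow_le_pow_right hn1 (by omega)
    · -- covering
      intro t ht S hcut
      have ht0 : (0:ℝ) < t := by linarith
      by_cases hbig : (n:ℝ) ≤ 16 * t
      · -- huge t : use ∅
        refine ⟨∅, Finset.mem_union_right _ (Finset.mem_singleton_self ∅), ?_, ?_⟩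
        · simp only [Finset.sdiff_empty, Finset.empty_sdiff, Finset.union_empty]
          calc (S.card : ℝ) ≤ ((Finset.univ : Finset V).card : ℝ) := by
                exact_mod_cast Finset.card_le_card (Finset.subset_univ S)
            _ = 2*n := by rw [hV]; push_cast; ring
            _ ≤ 32 * t := by linarith
        · rw [cutVal_empty]
          push_cast
          positivity
      · push_neg at hbig
        have hqd : ∀ (v : V) (T : Finset V), degIn G v T ≤ d := by
          intro v T
          have h := degIn_le G v T
          rwa [hreg v] at h
        -- cast identities for the cut decomposition
        have hcastT1 : ((∑ x ∈ S ∩ X, (d - degIn G x (S ∩ Y)) : ℕ) : ℝ)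
            = ∑ x ∈ S ∩ X, ((d:ℝ) - (degIn G x (S ∩ Y) : ℝ)) := by
          rw [Nat.cast_sum]
          exact Finset.sum_congr rfl fun x _ => Nat.cast_sub (hqd x _)
        have hcastT2 : ((∑ y ∈ S ∩ Y, (d - degIn G y (S ∩ X)) : ℕ) : ℝ)
            = ∑ y ∈ S ∩ Y, ((d:ℝ) - (degIn G y (S ∩ X) : ℝ)) := by
          rw [Nat.cast_sum]
          exact Finset.sum_congr rfl fun y _ => Nat.cast_sub (hqd y _)
        have hτR : ((cutVal G S : ℕ) : ℝ)
            = ∑ x ∈ S ∩ X, ((d:ℝ) - (degIn G x (S ∩ Y) : ℝ))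
              + ∑ y ∈ S ∩ Y, ((d:ℝ) - (degIn G y (S ∩ X) : ℝ)) := by
          rw [cut_split G hbip hreg S, Nat.cast_add, hcastT1, hcastT2]
        have hU1 : (∑ y ∈ Y \ (S ∩ Y), ((degIn G y (S ∩ X) : ℕ) : ℝ))
            = ∑ x ∈ S ∩ X, ((d:ℝ) - (degIn G x (S ∩ Y) : ℝ)) := by
          rw [← hcastT1, ← Nat.cast_sum]
          exact_mod_cast sum_out G hreg (S ∩ X) (S ∩ Y)
            (fun x hx => bip_nbr G hbip (Finset.mem_inter.1 hx).2)
        have hU2 : (∑ x ∈ X \ (S ∩ X), ((degIn G x (S ∩ Y) : ℕ) : ℝ))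
            = ∑ y ∈ S ∩ Y, ((d:ℝ) - (degIn G y (S ∩ X) : ℝ)) := by
          rw [← hcastT2, ← Nat.cast_sum]
          exact_mod_cast sum_out G hreg (S ∩ Y) (S ∩ X)
            (fun y hy => bip_nbr' G hbip (Finset.mem_inter.1 hy).2)
        -- two coarse seeds
        obtain ⟨g1, hg1⟩ := coarse (s := s) G hreg X Y (S ∩ X) (S ∩ Y)
          Finset.inter_subset_right Finset.inter_subset_right
          (fun y hy => bip_nbr' G hbip hy) hX (le_of_eq hY)
          (by omega) (by omega) (by omega)
        obtain ⟨g2, hg2⟩ := coarse (s := s) G hreg Y X (S ∩ Y) (S ∩ X)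
          Finset.inter_subset_right Finset.inter_subset_right
          (fun x hx => bip_nbr G hbip hx) hY (le_of_eq hX)
          (by omega) (by omega) (by omega)
        rw [hU1] at hg1
        rw [hU2] at hg2
        -- error term bound
        have hEbound : 4 * (n:ℝ)^3 / ((s:ℝ) * d) ≤ (δ * n / 64) * d := by
          rw [div_le_iff₀ (by positivity)]
          have hd2 : (9/16) * (δ*n)^2 ≤ (d:ℝ)^2 := by nlinarith [hdlb, hδn4, hδ0]
          have hsδ : (1024:ℝ) ≤ (s:ℝ) * δ^3 := by
            rw [div_le_iff₀ (by positivity)] at hsRc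
            linarith
          have k1 : (s:ℝ)*((9/16)*(δ*n)^2) ≤ (s:ℝ)*(d:ℝ)^2 :=
            mul_le_mul_of_nonneg_left hd2 hsR0.le
          have k2 : (δ*n) * ((s:ℝ)*((9/16)*(δ*n)^2)) ≤ (δ*n) * ((s:ℝ)*(d:ℝ)^2) :=
            mul_le_mul_of_nonneg_left k1 (by positivity)
          have k3 : (9/16)*1024*(n:ℝ)^3 ≤ (9/16)*((s:ℝ)*δ^3)*(n:ℝ)^3 := by
            apply mul_le_mul_of_nonneg_right _ (by positivity)
            linarith
          have k4 : (δ*n) * ((s:ℝ)*((9/16)*(δ*n)^2)) = (9/16)*((s:ℝ)*δ^3)*(n:ℝ)^3 := by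
            ring
          have k5 : (δ * n / 64) * d * ((s:ℝ) * d) = (δ*n) * ((s:ℝ)*(d:ℝ)^2) / 64 := by
            ring
          nlinarith [k2, k3, k4, k5, pow_nonneg hnR.le 3]
        -- per-side coarse error bounds
        have hmYb : (((S ∩ Y) \ seedSet G n d Y g1 ∪ seedSet G n d Y g1 \ (S ∩ Y)).card : ℝ)
            ≤ 4*t + δ*n/64 := by
          apply le_of_mul_le_mul_right _ hdR
          calc (((S ∩ Y) \ seedSet G n d Y g1 ∪ seedSet G n d Y g1 \ (S ∩ Y)).card : ℝ) * d
              ≤ 4 * ((cutVal G S : ℕ) : ℝ) + 4 * (n:ℝ)^3 / ((s:ℝ) * d) := by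
                rw [hτR]; linarith [hg1]
            _ ≤ 4 * (t * d) + (δ * n / 64) * d := by linarith [hEbound, hcut]
            _ = (4*t + δ*n/64) * d := by ring
        have hmXb : (((S ∩ X) \ seedSet G n d X g2 ∪ seedSet G n d X g2 \ (S ∩ X)).card : ℝ)
            ≤ 4*t + δ*n/64 := by
          apply le_of_mul_le_mul_right _ hdR
          calc (((S ∩ X) \ seedSet G n d X g2 ∪ seedSet G n d X g2 \ (S ∩ X)).card : ℝ) * d
              ≤ 4 * ((cutVal G S : ℕ) : ℝ) + 4 * (n:ℝ)^3 / ((s:ℝ) * d) := by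
                rw [hτR]; linarith [hg2]
            _ ≤ 4 * (t * d) + (δ * n / 64) * d := by linarith [hEbound, hcut]
            _ = (4*t + δ*n/64) * d := by ring
        by_cases hmid : δ * n / 256 < t
        · -- mid t : coarse candidate
          obtain ⟨hsp, hcv⟩ := cover_pair G hbip hreg S (seedSet G n d X g2)
            (seedSet G n d Y g1) (Finset.filter_subset _ _) (Finset.filter_subset _ _)
          have hcard : ((S \ (seedSet G n d X g2 ∪ seedSet G n d Y g1)
              ∪ (seedSet G n d X g2 ∪ seedSet G n d Y g1) \ S).card : ℝ) ≤ 16 * t := by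
            rw [hsp]
            linarith [hmXb, hmYb, hmid]
          have hmem : seedSet G n d X g2 ∪ seedSet G n d Y g1 ∈ (I1 ∪ I2) ∪ {∅} := by
            apply Finset.mem_union_left
            apply Finset.mem_union_left
            rw [hI1, Finset.mem_image]
            exact ⟨(g1, g2), Finset.mem_univ _, rfl⟩
          refine ⟨seedSet G n d X g2 ∪ seedSet G n d Y g1,
            hmem, hcard.trans (by linarith), ?_⟩
          · calc ((cutVal G (seedSet G n d X g2 ∪ seedSet G n d Y g1) : ℕ) : ℝ)
                ≤ ((cutVal G S : ℕ) : ℝ) + (d:ℝ) * ((S \ (seedSet G n d X g2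
                    ∪ seedSet G n d Y g1) ∪ (seedSet G n d X g2
                    ∪ seedSet G n d Y g1) \ S).card : ℝ) := hcv
              _ ≤ t * d + (d:ℝ) * (16 * t) := by
                  have := mul_le_mul_of_nonneg_left hcard hdR.le
                  linarith [hcut]
              _ ≤ 33 * t * d := by nlinarith [ht0, hdR]
        · push_neg at hmid
          -- small t : refined candidate
          have hmYs : 2 * (((S ∩ Y) \ seedSet G n d Y g1
              ∪ seedSet G n d Y g1 \ (S ∩ Y)).card : ℝ) ≤ (d:ℝ)/12 := by
            have h1 : 4*t ≤ δ*n/64 := by linarith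
            nlinarith [hdlb, hmYb, h1]
          have hmXs : 2 * (((S ∩ X) \ seedSet G n d X g2
              ∪ seedSet G n d X g2 \ (S ∩ X)).card : ℝ) ≤ (d:ℝ)/12 := by
            have h1 : 4*t ≤ δ*n/64 := by linarith
            nlinarith [hdlb, hmXb, h1]
          have hrefX := refine G hbip hreg S (seedSet G n d Y g1)
          have hrefY := refine G (bip_symm G hbip) hreg S (seedSet G n d X g2)
          have hrefXR : (d:ℝ) * (((S ∩ X) \ refSet G d X (seedSet G n d Y g1)
                ∪ refSet G d X (seedSet G n d Y g1) \ (S ∩ X)).card : ℝ)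
              ≤ 2 * (((S ∩ Y) \ seedSet G n d Y g1
                ∪ seedSet G n d Y g1 \ (S ∩ Y)).card : ℝ)
                * (((S ∩ X) \ refSet G d X (seedSet G n d Y g1)
                ∪ refSet G d X (seedSet G n d Y g1) \ (S ∩ X)).card : ℝ)
                + 2 * ((cutVal G S : ℕ) : ℝ) := by
            exact_mod_cast hrefX
          have hrefYR : (d:ℝ) * (((S ∩ Y) \ refSet G d Y (seedSet G n d X g2)
                ∪ refSet G d Y (seedSet G n d X g2) \ (S ∩ Y)).card : ℝ)
              ≤ 2 * (((S ∩ X) \ seedSet G n d X g2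
                ∪ seedSet G n d X g2 \ (S ∩ X)).card : ℝ)
                * (((S ∩ Y) \ refSet G d Y (seedSet G n d X g2)
                ∪ refSet G d Y (seedSet G n d X g2) \ (S ∩ Y)).card : ℝ)
                + 2 * ((cutVal G S : ℕ) : ℝ) := by
            exact_mod_cast hrefY
          have haXb : (((S ∩ X) \ refSet G d X (seedSet G n d Y g1)
              ∪ refSet G d X (seedSet G n d Y g1) \ (S ∩ X)).card : ℝ) ≤ 3 * t := by
            set a : ℝ := (((S ∩ X) \ refSet G d X (seedSet G n d Y g1)
              ∪ refSet G d X (seedSet G n d Y g1) \ (S ∩ X)).card : ℝ) with ha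
            have ha0 : 0 ≤ a := Nat.cast_nonneg _
            nlinarith [hrefXR, hmYs, hcut, hdR, ha0, ht0]
          have haYb : (((S ∩ Y) \ refSet G d Y (seedSet G n d X g2)
              ∪ refSet G d Y (seedSet G n d X g2) \ (S ∩ Y)).card : ℝ) ≤ 3 * t := by
            set a : ℝ := (((S ∩ Y) \ refSet G d Y (seedSet G n d X g2)
              ∪ refSet G d Y (seedSet G n d X g2) \ (S ∩ Y)).card : ℝ) with ha
            have ha0 : 0 ≤ a := Nat.cast_nonneg _
            nlinarith [hrefYR, hmXs, hcut, hdR, ha0, ht0]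
          obtain ⟨hsp, hcv⟩ := cover_pair G hbip hreg S
            (refSet G d X (seedSet G n d Y g1)) (refSet G d Y (seedSet G n d X g2))
            (Finset.filter_subset _ _) (Finset.filter_subset _ _)
          have hcard : ((S \ (refSet G d X (seedSet G n d Y g1)
              ∪ refSet G d Y (seedSet G n d X g2))
              ∪ (refSet G d X (seedSet G n d Y g1)
              ∪ refSet G d Y (seedSet G n d X g2)) \ S).card : ℝ) ≤ 6 * t := by
            rw [hsp]
            linarith [haXb, haYb]
          have hmem : refSet G d X (seedSet G n d Y g1) ∪ refSet G d Y (seedSet G n d X g2)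
              ∈ (I1 ∪ I2) ∪ {∅} := by
            apply Finset.mem_union_left
            apply Finset.mem_union_right
            rw [hI2, Finset.mem_image]
            exact ⟨(g1, g2), Finset.mem_univ _, rfl⟩
          refine ⟨refSet G d X (seedSet G n d Y g1) ∪ refSet G d Y (seedSet G n d X g2),
            hmem, hcard.trans (by linarith), ?_⟩
          · calc ((cutVal G (refSet G d X (seedSet G n d Y g1)
                  ∪ refSet G d Y (seedSet G n d X g2)) : ℕ) : ℝ)
                ≤ ((cutVal G S : ℕ) : ℝ) + (d:ℝ) * ((S \ (refSet G d X (seedSet G n d Y g1)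
                    ∪ refSet G d Y (seedSet G n d X g2))
                    ∪ (refSet G d X (seedSet G n d Y g1)
                    ∪ refSet G d Y (seedSet G n d X g2)) \ S).card : ℝ) := hcv
              _ ≤ t * d + (d:ℝ) * (6 * t) := by
                  have := mul_le_mul_of_nonneg_left hcard hdR.le
                  linarith [hcut]
              _ ≤ 33 * t * d := by nlinarith [ht0, hdR]
end
end

section
/- Let G be a d-regular bipartite graph with parts X and Y, let c \ge 1 be a real number, and let t be a positive integer with t \le d/(8c). Let C \subseteq X \cup Y be a cut with value |\nabla(C)| \le t d. Then the number of closed t-contracting subsets A \subseteq X satisfying |A \triangle (C \cap X)| \le c t and |N(A) \triangle (C \cap Y)| \le c t is at most 4^{t}. -/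
open scoped Classical

noncomputable section

variable {V : Type*}

variable [Fintype V] [DecidableEq V]

set_option linter.unusedSectionVars false
set_option linter.unusedVariables false

namespace Stmt6Aux

variable [Fintype V] [DecidableEq V]

lemma mem_nbr' {G : SimpleGraph V} {A : Finset V} {u : V} :
    u ∈ nbr G A ↔ ∃ a ∈ A, G.Adj a u := by simp [nbr]

lemma mem_nbrF' {G : SimpleGraph V} {v u : V} : u ∈ nbrF G v ↔ G.Adj v u := by simp [nbrF]

lemma nbrF_subset_nbr {G : SimpleGraph V} {A : Finset V} {x : V} (hx : x ∈ A) :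
    nbrF G x ⊆ nbr G A := fun u hu => mem_nbr'.2 ⟨x, hx, mem_nbrF'.1 hu⟩

lemma degIn_eq_sum (G : SimpleGraph V) (v : V) (S : Finset V) :
    degIn G v S = ∑ u ∈ S, if G.Adj v u then 1 else 0 := by
  have h : nbrF G v ∩ S = S.filter (fun u => G.Adj v u) := by
    ext u; simp [nbrF, Finset.mem_filter, and_comm]
  rw [degIn, h, Finset.card_filter]

lemma sum_degIn_comm (G : SimpleGraph V) (S T : Finset V) :
    ∑ y ∈ T, degIn G y S = ∑ x ∈ S, degIn G x T := by
  simp_rw [degIn_eq_sum]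
  rw [Finset.sum_comm]
  refine Finset.sum_congr rfl fun x _ => Finset.sum_congr rfl fun y _ => ?_
  simp only [G.adj_comm]

lemma degIn_mono (G : SimpleGraph V) (v : V) {S T : Finset V} (h : S ⊆ T) :
    degIn G v S ≤ degIn G v T :=
  Finset.card_le_card (Finset.inter_subset_inter (Finset.Subset.refl _) h)

lemma degIn_add_degIn {G : SimpleGraph V} {X A : Finset V} {y : V}
    (hA : A ⊆ X) (hy : nbrF G y ⊆ X) :
    degIn G y A + degIn G y (X \ A) = (nbrF G y).card := by
  have h1 : nbrF G y ∩ (X \ A) = nbrF G y \ A := by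
    ext u
    simp only [Finset.mem_inter, Finset.mem_sdiff]
    constructor
    · rintro ⟨h, _, h3⟩; exact ⟨h, h3⟩
    · rintro ⟨h, h3⟩; exact ⟨h, hy h, h3⟩
  rw [degIn, degIn, h1, Finset.card_inter_add_card_sdiff]

lemma bip_nbrF_X {G : SimpleGraph V} {X Y : Finset V} (hbip : IsBipartiteWith G X Y)
    {y : V} (hy : y ∈ Y) : nbrF G y ⊆ X := by
  intro u hu
  rcases hbip.2.2 y u (mem_nbrF'.1 hu) with ⟨h1, _⟩ | ⟨_, h2⟩
  · exact absurd hy (Finset.disjoint_left.1 hbip.1 h1)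
  · exact h2

lemma nbr_subset_Y {G : SimpleGraph V} {X Y : Finset V} (hbip : IsBipartiteWith G X Y)
    {A : Finset V} (hA : A ⊆ X) : nbr G A ⊆ Y := by
  intro y hy
  obtain ⟨a, ha, hadj⟩ := mem_nbr'.1 hy
  rcases hbip.2.2 a y hadj with ⟨_, h2⟩ | ⟨h1, _⟩
  · exact h2
  · exact absurd h1 (Finset.disjoint_left.1 hbip.1 (hA ha))

lemma budget {G : SimpleGraph V} {X Y : Finset V} {d : ℕ}
    (hbip : IsBipartiteWith G X Y) (hreg : IsRegularDeg G d)
    {A : Finset V} (hA : A ⊆ X) :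
    ∑ y ∈ nbr G A, degIn G y (X \ A) + d * A.card = d * (nbr G A).card := by
  have h1 : ∀ y ∈ nbr G A, degIn G y A + degIn G y (X \ A) = d := fun y hy =>
    (degIn_add_degIn hA (bip_nbrF_X hbip (nbr_subset_Y hbip hA hy))).trans (hreg y)
  have h2 : ∑ y ∈ nbr G A, (degIn G y A + degIn G y (X \ A)) = d * (nbr G A).card := by
    rw [Finset.sum_congr rfl h1, Finset.sum_const, smul_eq_mul, mul_comm]
  rw [Finset.sum_add_distrib] at h2
  have h3 : ∑ y ∈ nbr G A, degIn G y A = d * A.card := by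
    rw [sum_degIn_comm]
    have h4 : ∀ x ∈ A, degIn G x (nbr G A) = d := fun x hx => by
      rw [degIn, Finset.inter_eq_left.2 (nbrF_subset_nbr hx), hreg]
    rw [Finset.sum_congr rfl h4, Finset.sum_const, smul_eq_mul, mul_comm]
  omega

end Stmt6Aux

open Stmt6Aux

/-- given a cut `C` of value at most `td` in a `d`-regular bipartite
graph, with `c ≥ 1` and `0 < t ≤ d/(8c)`, there are at most `4^t` closed
`t`-contracting `A ⊆ X` with `|A △ (C ∩ X)| ≤ ct` and `|N(A) △ (C ∩ Y)| ≤ ct`. -/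
theorem stmt_6 (G : SimpleGraph V) (X Y : Finset V) (d : ℕ)
    (hbip : IsBipartiteWith G X Y) (hreg : IsRegularDeg G d)
    (c : ℝ) (hc : 1 ≤ c) (t : ℕ) (ht : 0 < t)
    (htd : (t : ℝ) ≤ (d : ℝ) / (8 * c))
    (C : Finset V) (hcut : cutVal G C ≤ t * d) :
    (X.powerset.filter (fun A => IsClosedSet G X A ∧ Contracting G X (t : ℤ) A ∧
        (((A \ (C ∩ X)) ∪ ((C ∩ X) \ A)).card : ℝ) ≤ c * t ∧
        (((nbr G A \ (C ∩ Y)) ∪ ((C ∩ Y) \ nbr G A)).card : ℝ) ≤ c * t)).card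
      ≤ 4 ^ t := by
  classical
  set 𝒜 : Finset (Finset V) := X.powerset.filter (fun A => IsClosedSet G X A ∧
      Contracting G X (t : ℤ) A ∧
      (((A \ (C ∩ X)) ∪ ((C ∩ X) \ A)).card : ℝ) ≤ c * t ∧
      (((nbr G A \ (C ∩ Y)) ∪ ((C ∩ Y) \ nbr G A)).card : ℝ) ≤ c * t) with h𝒜
  obtain h | ⟨A0, hA0⟩ := 𝒜.eq_empty_or_nonempty
  · rw [h]; simpa using Nat.zero_le _
  have hmem : ∀ A ∈ 𝒜, A ⊆ X ∧ cl G X A = A ∧ (nbr G A).card ≤ A.card + (t - 1) ∧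
      (((A \ (C ∩ X)) ∪ ((C ∩ X) \ A)).card : ℝ) ≤ c * t := by
    intro A hA
    rw [h𝒜, Finset.mem_filter, Finset.mem_powerset] at hA
    obtain ⟨hAX, hclA, hconA, h1, -⟩ := hA
    have hclA' : cl G X A = A := hclA
    have hconA' : ((nbr G A).card : ℤ) < ((cl G X A).card : ℤ) + t := hconA
    rw [hclA'] at hconA'
    refine ⟨hAX, hclA', ?_, h1⟩
    omega
  have hc0 : (0 : ℝ) < c := lt_of_lt_of_le one_pos hc
  have h8ct : 8 * c * (t : ℝ) ≤ d := by
    rw [le_div_iff₀ (by positivity)] at htd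
    linarith
  have ht8 : 8 * t ≤ d := by
    have h1 : (8 * t : ℝ) ≤ (d : ℝ) := by nlinarith
    exact_mod_cast h1
  have hd0 : 0 < d := by omega
  have hdiff : ∀ A ∈ 𝒜, ∀ A' ∈ 𝒜, 4 * (A \ A').card ≤ d := by
    intro A hA A' hA'
    obtain ⟨hAX, -, -, hAK⟩ := hmem A hA
    obtain ⟨hA'X, -, -, hA'K⟩ := hmem A' hA'
    have hsub : A \ A' ⊆ (A \ (C ∩ X)) ∪ ((C ∩ X) \ A') := by
      intro x hx
      rw [Finset.mem_sdiff] at hx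
      rw [Finset.mem_union, Finset.mem_sdiff, Finset.mem_sdiff]
      by_cases hxK : x ∈ C ∩ X
      · exact Or.inr ⟨hxK, hx.2⟩
      · exact Or.inl ⟨hx.1, hxK⟩
    have h2 : (A \ A').card ≤ (A \ (C ∩ X)).card + ((C ∩ X) \ A').card :=
      le_trans (Finset.card_le_card hsub) (Finset.card_union_le _ _)
    have h3 : ((A \ (C ∩ X)).card : ℝ) ≤ c * t := by
      refine le_trans ?_ hAK
      exact_mod_cast Finset.card_le_card (fun u hu => Finset.mem_union_left _ hu)
    have h4 : (((C ∩ X) \ A').card : ℝ) ≤ c * t := by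
      refine le_trans ?_ hA'K
      exact_mod_cast Finset.card_le_card (fun u hu => Finset.mem_union_right _ hu)
    have h1 : ((A \ A').card : ℝ) ≤ c * t + c * t := by
      calc ((A \ A').card : ℝ) ≤ ((A \ (C ∩ X)).card : ℝ) + (((C ∩ X) \ A').card : ℝ) := by
            exact_mod_cast h2
        _ ≤ c * t + c * t := add_le_add h3 h4
    have h5 : (4 * (A \ A').card : ℝ) ≤ (d : ℝ) := by push_cast; linarith
    exact_mod_cast h5
  have hbudget : ∀ A ∈ 𝒜, ∑ y ∈ nbr G A, degIn G y (X \ A) ≤ (t - 1) * d := by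
    intro A hA
    obtain ⟨hAX, -, hcard, -⟩ := hmem A hA
    have h1 := budget hbip hreg hAX
    have h2 : d * (nbr G A).card ≤ d * (A.card + (t - 1)) := Nat.mul_le_mul_left _ hcard
    have h3 : d * (A.card + (t - 1)) = d * A.card + d * (t - 1) := Nat.mul_add _ _ _
    have h4 : (t - 1) * d = d * (t - 1) := Nat.mul_comm _ _
    omega
  have hs : ∀ A ∈ 𝒜, 4 * (nbr G A \ nbr G A0).card ≤ d := by
    intro A hA
    obtain ⟨hAX, -, -, -⟩ := hmem A hA
    have hy : ∀ y ∈ nbr G A \ nbr G A0, 3 * d ≤ 4 * degIn G y (X \ A) := by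
      intro y hy
      rw [Finset.mem_sdiff] at hy
      have hyY : y ∈ Y := nbr_subset_Y hbip hAX hy.1
      have hpart : degIn G y A + degIn G y (X \ A) = d :=
        (degIn_add_degIn hAX (bip_nbrF_X hbip hyY)).trans (hreg y)
      have hsub : nbrF G y ∩ A ⊆ A \ A0 := by
        intro x hx
        rw [Finset.mem_inter] at hx
        rw [Finset.mem_sdiff]
        exact ⟨hx.2, fun hx0 => hy.2 (mem_nbr'.2 ⟨x, hx0, (G.adj_comm y x).1 (mem_nbrF'.1 hx.1)⟩)⟩
      have h1 : degIn G y A ≤ (A \ A0).card := Finset.card_le_card hsub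
      have h2 : 4 * (A \ A0).card ≤ d := hdiff A hA A0 hA0
      omega
    have hsum : (nbr G A \ nbr G A0).card * (3 * d) ≤ 4 * ∑ y ∈ nbr G A, degIn G y (X \ A) := by
      calc (nbr G A \ nbr G A0).card * (3 * d)
          = ∑ _y ∈ nbr G A \ nbr G A0, 3 * d := by rw [Finset.sum_const, smul_eq_mul]
        _ ≤ ∑ y ∈ nbr G A \ nbr G A0, 4 * degIn G y (X \ A) := Finset.sum_le_sum hy
        _ ≤ ∑ y ∈ nbr G A, 4 * degIn G y (X \ A) :=
            Finset.sum_le_sum_of_subset (Finset.sdiff_subset)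
        _ = 4 * ∑ y ∈ nbr G A, degIn G y (X \ A) := (Finset.mul_sum _ _ _).symm
    have h6 : (nbr G A \ nbr G A0).card * (3 * d) ≤ 4 * ((t - 1) * d) :=
      le_trans hsum (Nat.mul_le_mul_left _ (hbudget A hA))
    have h6' : (3 * (nbr G A \ nbr G A0).card) * d ≤ (4 * (t - 1)) * d := by
      calc (3 * (nbr G A \ nbr G A0).card) * d
          = (nbr G A \ nbr G A0).card * (3 * d) := by ring
        _ ≤ 4 * ((t - 1) * d) := h6
        _ = (4 * (t - 1)) * d := by ring
    have h7 : 3 * (nbr G A \ nbr G A0).card ≤ 4 * (t - 1) :=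
      Nat.le_of_mul_le_mul_right h6' hd0
    omega
  obtain ⟨hA0X, hA0cl, hA0card, -⟩ := hmem A0 hA0
  set Xb : Finset V := (X \ A0).filter (fun x => 3 * d ≤ 4 * degIn G x (nbr G A0)) with hXbdef
  set Yb : Finset V := (nbr G A0).filter (fun y => 3 * d ≤ 4 * degIn G y (X \ A0)) with hYbdef
  have hfA : ∀ A ∈ 𝒜, A \ A0 ⊆ Xb := by
    intro A hA x hx
    obtain ⟨hAX, -, -, -⟩ := hmem A hA
    rw [Finset.mem_sdiff] at hx
    rw [hXbdef, Finset.mem_filter, Finset.mem_sdiff]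
    refine ⟨⟨hAX hx.1, hx.2⟩, ?_⟩
    have h2 : nbrF G x \ nbr G A0 ⊆ nbr G A \ nbr G A0 := by
      intro u hu; rw [Finset.mem_sdiff] at hu ⊢
      exact ⟨nbrF_subset_nbr hx.1 hu.1, hu.2⟩
    have h3 : (nbrF G x \ nbr G A0).card ≤ (nbr G A \ nbr G A0).card := Finset.card_le_card h2
    have h4 : degIn G x (nbr G A0) + (nbrF G x \ nbr G A0).card = d := by
      have h5 := Finset.card_inter_add_card_sdiff (nbrF G x) (nbr G A0)
      rw [hreg x] at h5
      rw [degIn]; exact h5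
    have h5 := hs A hA
    omega
  have hfY : ∀ A ∈ 𝒜, nbr G A0 \ nbr G A ⊆ Yb := by
    intro A hA y hy
    obtain ⟨hAX, -, -, -⟩ := hmem A hA
    rw [Finset.mem_sdiff] at hy
    rw [hYbdef, Finset.mem_filter]
    refine ⟨hy.1, ?_⟩
    have hyY : y ∈ Y := nbr_subset_Y hbip hA0X hy.1
    have hpart : degIn G y A0 + degIn G y (X \ A0) = d :=
      (degIn_add_degIn hA0X (bip_nbrF_X hbip hyY)).trans (hreg y)
    have hsub : nbrF G y ∩ A0 ⊆ A0 \ A := by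
      intro x hx
      rw [Finset.mem_inter] at hx
      rw [Finset.mem_sdiff]
      exact ⟨hx.2, fun hxA => hy.2 (mem_nbr'.2 ⟨x, hxA, (G.adj_comm y x).1 (mem_nbrF'.1 hx.1)⟩)⟩
    have h1 : degIn G y A0 ≤ (A0 \ A).card := Finset.card_le_card hsub
    have h2 : 4 * (A0 \ A).card ≤ d := hdiff A0 hA0 A hA
    omega
  have he0' : ∑ x ∈ X \ A0, degIn G x (nbr G A0) ≤ (t - 1) * d := by
    rw [sum_degIn_comm]; exact hbudget A0 hA0
  have hXbsub : Xb ⊆ X \ A0 := by rw [hXbdef]; exact Finset.filter_subset _ _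
  set St : Finset V := (X \ A0) \ Xb with hStdef
  have hsplit : ∑ x ∈ St, degIn G x (nbr G A0) + ∑ x ∈ Xb, degIn G x (nbr G A0)
      = ∑ x ∈ X \ A0, degIn G x (nbr G A0) := Finset.sum_sdiff hXbsub
  have hXbsum : Xb.card * (3 * d) ≤ 4 * ∑ x ∈ Xb, degIn G x (nbr G A0) := by
    calc Xb.card * (3 * d) = ∑ _x ∈ Xb, 3 * d := by rw [Finset.sum_const, smul_eq_mul]
      _ ≤ ∑ x ∈ Xb, 4 * degIn G x (nbr G A0) := by
          refine Finset.sum_le_sum fun x hx => ?_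
          rw [hXbdef, Finset.mem_filter] at hx
          exact hx.2
      _ = 4 * ∑ x ∈ Xb, degIn G x (nbr G A0) := (Finset.mul_sum _ _ _).symm
  have ha3 : 3 * Xb.card ≤ 4 * (t - 1) := by
    have h1 : (3 * Xb.card) * d ≤ (4 * (t - 1)) * d := by
      calc (3 * Xb.card) * d = Xb.card * (3 * d) := by ring
        _ ≤ 4 * ∑ x ∈ Xb, degIn G x (nbr G A0) := hXbsum
        _ ≤ 4 * ∑ x ∈ X \ A0, degIn G x (nbr G A0) :=
            Nat.mul_le_mul_left _ (Finset.sum_le_sum_of_subset hXbsub)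
        _ ≤ 4 * ((t - 1) * d) := Nat.mul_le_mul_left _ he0'
        _ = (4 * (t - 1)) * d := by ring
    exact Nat.le_of_mul_le_mul_right h1 hd0
  have hYterm : ∀ y ∈ Yb, 7 * d ≤ 12 * degIn G y St := by
    intro y hy
    rw [hYbdef, Finset.mem_filter] at hy
    have h1 : degIn G y (X \ A0) ≤ degIn G y St + Xb.card := by
      have hsub2 : nbrF G y ∩ (X \ A0) ⊆ (nbrF G y ∩ St) ∪ Xb := by
        intro u hu
        rw [Finset.mem_inter] at hu
        by_cases hux : u ∈ Xb
        · exact Finset.mem_union_right _ hux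
        · refine Finset.mem_union_left _ ?_
          rw [Finset.mem_inter, hStdef, Finset.mem_sdiff]
          exact ⟨hu.1, hu.2, hux⟩
      calc degIn G y (X \ A0) ≤ ((nbrF G y ∩ St) ∪ Xb).card := Finset.card_le_card hsub2
        _ ≤ (nbrF G y ∩ St).card + Xb.card := Finset.card_union_le _ _
    have h2 := hy.2
    omega
  have hYsum : Yb.card * (7 * d) ≤ 12 * ∑ x ∈ St, degIn G x (nbr G A0) := by
    calc Yb.card * (7 * d) = ∑ _y ∈ Yb, 7 * d := by rw [Finset.sum_const, smul_eq_mul]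
      _ ≤ ∑ y ∈ Yb, 12 * degIn G y St := Finset.sum_le_sum hYterm
      _ = 12 * ∑ y ∈ Yb, degIn G y St := (Finset.mul_sum _ _ _).symm
      _ = 12 * ∑ x ∈ St, degIn G x Yb := by rw [sum_degIn_comm]
      _ ≤ 12 * ∑ x ∈ St, degIn G x (nbr G A0) := by
          refine Nat.mul_le_mul_left _ (Finset.sum_le_sum fun x hx => degIn_mono G x ?_)
          rw [hYbdef]; exact Finset.filter_subset _ _
  have hab : Xb.card + Yb.card ≤ 2 * t := by
    have h2 : Xb.card * (9 * d) ≤ 12 * ∑ x ∈ Xb, degIn G x (nbr G A0) := by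
      calc Xb.card * (9 * d) = 3 * (Xb.card * (3 * d)) := by ring
        _ ≤ 3 * (4 * ∑ x ∈ Xb, degIn G x (nbr G A0)) := Nat.mul_le_mul_left _ hXbsum
        _ = 12 * ∑ x ∈ Xb, degIn G x (nbr G A0) := by ring
    have h1 : Yb.card * (7 * d) + Xb.card * (9 * d) ≤ 12 * ((t - 1) * d) := by
      calc Yb.card * (7 * d) + Xb.card * (9 * d)
          ≤ 12 * ∑ x ∈ St, degIn G x (nbr G A0) + 12 * ∑ x ∈ Xb, degIn G x (nbr G A0) :=
            Nat.add_le_add hYsum h2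
        _ = 12 * (∑ x ∈ St, degIn G x (nbr G A0) + ∑ x ∈ Xb, degIn G x (nbr G A0)) := by ring
        _ = 12 * ∑ x ∈ X \ A0, degIn G x (nbr G A0) := by rw [hsplit]
        _ ≤ 12 * ((t - 1) * d) := Nat.mul_le_mul_left _ he0'
    have h3 : (7 * Yb.card + 9 * Xb.card) * d ≤ (12 * (t - 1)) * d := by
      calc (7 * Yb.card + 9 * Xb.card) * d = Yb.card * (7 * d) + Xb.card * (9 * d) := by ring
        _ ≤ 12 * ((t - 1) * d) := h1
        _ = (12 * (t - 1)) * d := by ring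
    have h4 : 7 * Yb.card + 9 * Xb.card ≤ 12 * (t - 1) := Nat.le_of_mul_le_mul_right h3 hd0
    omega
  have hinj : 𝒜.card ≤ (Xb.powerset ×ˢ Yb.powerset).card := by
    apply Finset.card_le_card_of_injOn (fun A => (A \ A0, nbr G A0 \ nbr G A))
    · intro A hA
      rw [Finset.mem_coe, Finset.mem_product, Finset.mem_powerset, Finset.mem_powerset]
      exact ⟨hfA A hA, hfY A hA⟩
    · intro A hA A' hA' hEq
      obtain ⟨hAX, hAcl, -, -⟩ := hmem A (Finset.mem_coe.1 hA)
      obtain ⟨hA'X, hA'cl, -, -⟩ := hmem A' (Finset.mem_coe.1 hA')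
      have h1 : A \ A0 = A' \ A0 := congrArg Prod.fst hEq
      have h2 : nbr G A0 \ nbr G A = nbr G A0 \ nbr G A' := congrArg Prod.snd hEq
      have key : ∀ B B' : Finset V, B \ A0 = B' \ A0 →
          nbr G A0 \ nbr G B = nbr G A0 \ nbr G B' → nbr G B ⊆ nbr G B' := by
        intro B B' hB hN y hyB
        by_cases hy0 : y ∈ nbr G A0
        · by_contra hyB'
          have h6 : y ∈ nbr G A0 \ nbr G B' := Finset.mem_sdiff.2 ⟨hy0, hyB'⟩
          rw [← hN, Finset.mem_sdiff] at h6
          exact h6.2 hyB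
        · obtain ⟨x, hxB, hadj⟩ := mem_nbr'.1 hyB
          have hx0 : x ∉ A0 := fun hx0 => hy0 (mem_nbr'.2 ⟨x, hx0, hadj⟩)
          have h7 : x ∈ B' \ A0 := hB ▸ Finset.mem_sdiff.2 ⟨hxB, hx0⟩
          exact mem_nbr'.2 ⟨x, (Finset.mem_sdiff.1 h7).1, hadj⟩
      have hnbr : nbr G A = nbr G A' :=
        Finset.Subset.antisymm (key A A' h1 h2) (key A' A h1.symm h2.symm)
      have hcl2 : cl G X A = cl G X A' := by rw [cl, cl, hnbr]
      rw [hAcl, hA'cl] at hcl2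
      exact hcl2
  calc 𝒜.card ≤ (Xb.powerset ×ˢ Yb.powerset).card := hinj
    _ = 2 ^ Xb.card * 2 ^ Yb.card := by
        rw [Finset.card_product, Finset.card_powerset, Finset.card_powerset]
    _ = 2 ^ (Xb.card + Yb.card) := (pow_add 2 _ _).symm
    _ ≤ 2 ^ (2 * t) := Nat.pow_le_pow_right (by norm_num) hab
    _ = 4 ^ t := by rw [pow_mul]; norm_num
end
end

section
/- Let G be a d-regular bipartite graph with parts X and Y, let c \ge 1 be a real number, let t be a positive integer, and let C \subseteq X \cup Y be a cut with value |\nabla(C)| \le t d. Set A' := C \cap X, W' := C \cap Y, and S_X := \{v \in X \setminus A' : |N(v) \setminus W'| \le 3ct\}. Then every closed t-contracting subset A \subseteq X with |A \triangle A'| \le ct satisfies A \setminus A' \subseteq S_X. -/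
open scoped Classical

noncomputable section

variable {V : Type*}

variable [Fintype V] [DecidableEq V]

private lemma nbr_inter_eq (G : SimpleGraph V) (y : V) (Q : Finset V) :
    nbrF G y ∩ Q = Q.filter (fun x => G.Adj y x) := by
  ext x
  simp [nbrF, Finset.mem_filter, and_comm]

private lemma double_count (G : SimpleGraph V) (P Q : Finset V) :
    ∑ y ∈ P, (nbrF G y ∩ Q).card = ∑ x ∈ Q, (nbrF G x ∩ P).card := by
  simp only [nbr_inter_eq, Finset.card_filter]
  rw [Finset.sum_comm]
  refine Finset.sum_congr rfl fun x _ => Finset.sum_congr rfl fun y _ => ?_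
  simp only [G.adj_comm y x]

private lemma nbrF_subset_nbr (G : SimpleGraph V) {A : Finset V} {a : V} (ha : a ∈ A) :
    nbrF G a ⊆ nbr G A := by
  intro x hx
  simp only [nbrF, Finset.mem_filter, Finset.mem_univ, true_and] at hx
  simp only [nbr, Finset.mem_filter, Finset.mem_univ, true_and]
  exact ⟨a, ha, hx⟩

private lemma edges_from_A (G : SimpleGraph V) (A : Finset V) :
    ∑ y ∈ nbr G A, (nbrF G y ∩ A).card = ∑ a ∈ A, (nbrF G a).card := by
  rw [double_count]
  refine Finset.sum_congr rfl fun a ha => ?_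
  rw [Finset.inter_eq_left.mpr (nbrF_subset_nbr G ha)]

/-- with `A' = C ∩ X`, `W' = C ∩ Y` and
`S_X = {v ∈ X \ A' : |N(v) \ W'| ≤ 3ct}`, every closed `t`-contracting
`A ⊆ X` with `|A △ A'| ≤ ct` satisfies `A \ A' ⊆ S_X`. -/
theorem stmt_7 (G : SimpleGraph V) (X Y : Finset V) (d : ℕ)
    (hbip : IsBipartiteWith G X Y) (hreg : IsRegularDeg G d)
    (c : ℝ) (hc : 1 ≤ c) (t : ℕ) (ht : 0 < t)
    (C : Finset V) (hcut : cutVal G C ≤ t * d)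
    (A : Finset V) (hAX : A ⊆ X) (hclosed : IsClosedSet G X A)
    (hcontr : Contracting G X (t : ℤ) A)
    (hsym : (((A \ (C ∩ X)) ∪ ((C ∩ X) \ A)).card : ℝ) ≤ c * t) :
    A \ (C ∩ X) ⊆ (X \ (C ∩ X)).filter
      (fun v => ((nbrF G v \ (C ∩ Y)).card : ℝ) ≤ 3 * c * t) := by
  obtain ⟨hdisj, -, hbip3⟩ := hbip
  intro v hv
  obtain ⟨hvA, hvA'⟩ := Finset.mem_sdiff.mp hv
  have hvX : v ∈ X := hAX hvA
  rw [Finset.mem_filter]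
  refine ⟨Finset.mem_sdiff.mpr ⟨hvX, hvA'⟩, ?_⟩
  set A' := C ∩ X with hA'
  set W' := C ∩ Y with hW'
  set K := nbrF G v \ W' with hKdef
  -- every element of K is adjacent to v and lies outside C
  have hKadj : ∀ y ∈ K, G.Adj v y := by
    intro y hy
    have := (Finset.mem_sdiff.mp hy).1
    simpa [nbrF] using this
  have hKC : ∀ y ∈ K, y ∉ C := by
    intro y hy hyC
    have hadj := hKadj y hy
    have hyY : y ∈ Y := by
      rcases hbip3 v y hadj with ⟨-, h⟩ | ⟨h, -⟩
      · exact h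
      · exact absurd h (Finset.disjoint_left.mp hdisj hvX)
    exact (Finset.mem_sdiff.mp hy).2 (Finset.mem_inter.mpr ⟨hyC, hyY⟩)
  have hKnA : K ⊆ nbr G A := by
    intro y hy
    simp only [nbr, Finset.mem_filter, Finset.mem_univ, true_and]
    exact ⟨v, hvA, hKadj y hy⟩
  -- (1) pointwise partition bound
  have hpart : ∀ y ∈ K,
      d ≤ (nbrF G y ∩ A').card + (A \ A').card + (nbrF G y \ A).card := by
    intro y _
    have hsub : nbrF G y ⊆ (nbrF G y ∩ A') ∪ (A \ A') ∪ (nbrF G y \ A) := by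
      intro x hx
      simp only [Finset.mem_union, Finset.mem_inter, Finset.mem_sdiff]
      by_cases hxA' : x ∈ A'
      · exact Or.inl (Or.inl ⟨hx, hxA'⟩)
      · by_cases hxA : x ∈ A
        · exact Or.inl (Or.inr ⟨hxA, hxA'⟩)
        · exact Or.inr ⟨hx, hxA⟩
    calc d = (nbrF G y).card := (hreg y).symm
      _ ≤ ((nbrF G y ∩ A') ∪ (A \ A') ∪ (nbrF G y \ A)).card :=
          Finset.card_le_card hsub
      _ ≤ ((nbrF G y ∩ A') ∪ (A \ A')).card + (nbrF G y \ A).card :=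
          Finset.card_union_le _ _
      _ ≤ (nbrF G y ∩ A').card + (A \ A').card + (nbrF G y \ A).card :=
          Nat.add_le_add_right (Finset.card_union_le _ _) _
  -- summed version
  have hsum1 : K.card * d ≤
      (∑ y ∈ K, (nbrF G y ∩ A').card) + K.card * (A \ A').card
        + ∑ y ∈ K, (nbrF G y \ A).card := by
    have := Finset.sum_le_sum hpart
    simp only [Finset.sum_const, smul_eq_mul, Finset.sum_add_distrib] at this
    omega
  -- (2) cut bound : edges K → A' are cut edges
  have hcut2 : (∑ y ∈ K, (nbrF G y ∩ A').card) ≤ t * d := by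
    calc (∑ y ∈ K, (nbrF G y ∩ A').card)
        = ∑ x ∈ A', (nbrF G x ∩ K).card := double_count G K A'
      _ ≤ ∑ x ∈ A', (nbrF G x \ C).card := by
          refine Finset.sum_le_sum fun x _ => Finset.card_le_card ?_
          intro z hz
          obtain ⟨hz1, hz2⟩ := Finset.mem_inter.mp hz
          exact Finset.mem_sdiff.mpr ⟨hz1, hKC z hz2⟩
      _ ≤ ∑ u ∈ C, (nbrF G u \ C).card := by
          refine Finset.sum_le_sum_of_subset ?_
          exact Finset.inter_subset_left
      _ = cutVal G C := rfl
      _ ≤ t * d := hcut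
  -- (3) back-edge bound via contraction
  have hnAcard : (nbr G A).card + 1 ≤ A.card + t := by
    have h := hcontr
    unfold Contracting at h
    rw [hclosed] at h
    omega
  have hsumnA : (∑ y ∈ nbr G A, (nbrF G y \ A).card) + A.card * d
      = (nbr G A).card * d := by
    have h1 : ∀ y ∈ nbr G A,
        (nbrF G y ∩ A).card + (nbrF G y \ A).card = d := by
      intro y _
      rw [Finset.card_inter_add_card_sdiff, hreg y]
    calc (∑ y ∈ nbr G A, (nbrF G y \ A).card) + A.card * d
        = (∑ y ∈ nbr G A, (nbrF G y \ A).card)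
            + ∑ y ∈ nbr G A, (nbrF G y ∩ A).card := by
          rw [edges_from_A]
          congr 1
          rw [Finset.sum_congr rfl fun a _ => hreg a, Finset.sum_const, smul_eq_mul]
      _ = ∑ y ∈ nbr G A, ((nbrF G y ∩ A).card + (nbrF G y \ A).card) := by
          rw [Finset.sum_add_distrib]; omega
      _ = ∑ y ∈ nbr G A, d := Finset.sum_congr rfl h1
      _ = (nbr G A).card * d := by rw [Finset.sum_const, smul_eq_mul]
  have hback : (∑ y ∈ K, (nbrF G y \ A).card) + d ≤ t * d := by
    have h1 : (∑ y ∈ K, (nbrF G y \ A).card)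
        ≤ ∑ y ∈ nbr G A, (nbrF G y \ A).card :=
      Finset.sum_le_sum_of_subset hKnA
    have h2 : (nbr G A).card * d + d ≤ A.card * d + t * d := by
      have := Nat.mul_le_mul_right d hnAcard
      calc (nbr G A).card * d + d ≤ ((nbr G A).card + 1) * d := by ring_nf; omega
        _ ≤ (A.card + t) * d := Nat.mul_le_mul_right d hnAcard
        _ = A.card * d + t * d := by ring
    omega
  -- assemble the natural-number inequality
  have hmain : K.card * d + d ≤ t * d + K.card * (A \ A').card + t * d := by omega
  -- pass to the reals
  have hs : ((A \ A').card : ℝ) ≤ c * t := by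
    refine le_trans ?_ hsym
    exact_mod_cast Nat.cast_le.mpr (Finset.card_le_card Finset.subset_union_left)
  have hkd : (K.card : ℝ) ≤ d := by
    have h1 : K.card ≤ (nbrF G v).card := Finset.card_le_card Finset.sdiff_subset
    rw [hreg v] at h1
    exact_mod_cast h1
  have ht1 : (1 : ℝ) ≤ t := by exact_mod_cast ht
  have hmainR : (K.card : ℝ) * d + d
      ≤ t * d + K.card * ((A \ A').card : ℝ) + t * d := by exact_mod_cast hmain
  have hknn : (0 : ℝ) ≤ K.card := Nat.cast_nonneg _
  have hks : (K.card : ℝ) * ((A \ A').card : ℝ) ≤ K.card * (c * t) :=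
    mul_le_mul_of_nonneg_left hs hknn
  -- final arithmetic
  show ((K.card : ℕ) : ℝ) ≤ 3 * c * t
  by_contra hcon
  push_neg at hcon
  have hct : (0 : ℝ) < c * t := by positivity
  have hd3 : 3 * c * t < (d : ℝ) := lt_of_lt_of_le hcon hkd
  have hdc : (0 : ℝ) < (d : ℝ) - c * t := by nlinarith
  have h5 : (K.card : ℝ) * ((d : ℝ) - c * t) ≤ 2 * t * d - d := by nlinarith
  have h6 := mul_lt_mul_of_pos_right hcon hdc
  have hpos : (0 : ℝ) < 3 * c * t - 2 * t + 1 := by nlinarith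
  have h7 := mul_lt_mul_of_pos_right hd3 hpos
  nlinarith [mul_nonneg (sub_nonneg.mpr hc) (by positivity : (0:ℝ) ≤ c * t * t)]
end
end

section
/- Let G be a d-regular bipartite graph with parts X and Y of size n, and let t be a positive integer with t \le d/2. Then every nonempty closed t-contracting set A \subseteq X satisfies |A| > d - t \ge d/2. Consequently, every A \subseteq X all of whose 2-linked components are closed and t-contracting has at most 2n/d components. -/
open scoped Classical

noncomputable section

variable {V : Type*}

variable [Fintype V] [DecidableEq V]

private lemma card_lower_aux (G : SimpleGraph V) (X : Finset V) (d t : ℕ)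
    (hreg : IsRegularDeg G d) (A : Finset V) (hA : A.Nonempty)
    (hcl : IsClosedSet G X A) (hc : Contracting G X (t : ℤ) A) :
    (d : ℝ) - t < A.card := by
  obtain ⟨x, hx⟩ := hA
  have h1 : nbrF G x ⊆ nbr G A := by
    intro u hu
    simp only [nbrF, nbr, Finset.mem_filter, Finset.mem_univ, true_and] at hu ⊢
    exact ⟨x, hx, hu⟩
  have h2 : d ≤ (nbr G A).card := by
    calc d = (nbrF G x).card := (hreg x).symm
    _ ≤ (nbr G A).card := Finset.card_le_card h1
  have hc' : ((nbr G A).card : ℤ) < (A.card : ℤ) + t := by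
    have := hc
    rw [Contracting, hcl] at this
    exact this
  have : (d : ℤ) - t < A.card := by omega
  exact_mod_cast this

private lemma mem_comps_aux (G : SimpleGraph V) (A A' : Finset V)
    (h : A' ∈ comps G A) : A'.Nonempty ∧ A' ⊆ A := by
  obtain ⟨a, ha, rfl⟩ := Finset.mem_image.1 h
  refine ⟨⟨a, ?_⟩, Finset.filter_subset _ _⟩
  exact Finset.mem_filter.2 ⟨ha, Relation.ReflTransGen.refl⟩

private lemma comps_disjoint_aux (G : SimpleGraph V) (A : Finset V) :
    ∀ A1 ∈ comps G A, ∀ A2 ∈ comps G A, A1 ≠ A2 → Disjoint A1 A2 := by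
  intro A1 h1 A2 h2 hne
  obtain ⟨a1, ha1, rfl⟩ := Finset.mem_image.1 h1
  obtain ⟨a2, ha2, rfl⟩ := Finset.mem_image.1 h2
  rw [Finset.disjoint_left]
  intro b hb1 hb2
  apply hne
  simp only [Finset.mem_filter] at hb1 hb2
  have hsymm : Symmetric (fun u v => (gsq G).Adj u v ∧ u ∈ A ∧ v ∈ A) := by
    rintro u v ⟨h, hu, hv⟩; exact ⟨h.symm, hv, hu⟩
  have hS : Symmetric (Relation.ReflTransGen
      (fun u v => (gsq G).Adj u v ∧ u ∈ A ∧ v ∈ A)) := by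
    haveI : Std.Symm (fun u v => (gsq G).Adj u v ∧ u ∈ A ∧ v ∈ A) := ⟨fun _ _ h => hsymm h⟩
    have hS' : Std.Symm (Relation.ReflTransGen
        (fun u v => (gsq G).Adj u v ∧ u ∈ A ∧ v ∈ A)) := Relation.ReflTransGen.symmetric
    exact fun _ _ h => hS'.symm _ _ h
  have h12 : Relation.ReflTransGen (fun u v => (gsq G).Adj u v ∧ u ∈ A ∧ v ∈ A) a1 a2 :=
    hb1.2.trans (hS hb2.2)
  ext c
  simp only [Finset.mem_filter]
  exact ⟨fun ⟨hc, h⟩ => ⟨hc, (hS h12).trans h⟩, fun ⟨hc, h⟩ => ⟨hc, h12.trans h⟩⟩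

/-- for `0 < t ≤ d/2`, every nonempty closed `t`-contracting
`A ⊆ X` satisfies `|A| > d - t ≥ d/2`; consequently every `A ⊆ X` all of whose
2-linked components are closed and `t`-contracting has at most `2n/d`
components. -/
theorem stmt_11 (G : SimpleGraph V) (X Y : Finset V) (n d : ℕ)
    (hX : X.card = n) (hY : Y.card = n)
    (hbip : IsBipartiteWith G X Y) (hreg : IsRegularDeg G d)
    (t : ℕ) (ht : 0 < t) (htd : 2 * t ≤ d) :
    (∀ A ⊆ X, A.Nonempty → IsClosedSet G X A → Contracting G X (t : ℤ) A →
      (d : ℝ) - t < A.card ∧ (d : ℝ) / 2 ≤ (d : ℝ) - t) ∧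
    (∀ A ⊆ X, (∀ A' ∈ comps G A,
        IsClosedSet G X A' ∧ Contracting G X (t : ℤ) A') →
      ((comps G A).card : ℝ) ≤ 2 * n / d) := by
  have hd2 : (d : ℝ) / 2 ≤ (d : ℝ) - t := by
    have : (2 * t : ℝ) ≤ d := by exact_mod_cast htd
    linarith
  have hdpos : (0 : ℝ) < d := by
    have : 0 < d := by omega
    exact_mod_cast this
  constructor
  · intro A _ hA hcl hc
    exact ⟨card_lower_aux G X d t hreg A hA hcl hc, hd2⟩
  · intro A hAX hcomp
    set C := comps G A with hC
    have hlb : ∀ A' ∈ C, (d : ℝ) / 2 ≤ (A'.card : ℝ) := by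
      intro A' hA'
      obtain ⟨hne, _⟩ := mem_comps_aux G A A' hA'
      obtain ⟨hcl, hc⟩ := hcomp A' hA'
      have := card_lower_aux G X d t hreg A' hne hcl hc
      linarith
    have hsum1 : (C.card : ℝ) * ((d : ℝ) / 2) ≤ ∑ A' ∈ C, (A'.card : ℝ) := by
      have := Finset.card_nsmul_le_sum C (fun A' => (A'.card : ℝ)) ((d : ℝ) / 2) hlb
      rwa [nsmul_eq_mul] at this
    have hsum2 : ∑ A' ∈ C, A'.card ≤ A.card := by
      rw [← Finset.card_biUnion (comps_disjoint_aux G A)]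
      apply Finset.card_le_card
      intro x hx
      obtain ⟨A', hA', hxA'⟩ := Finset.mem_biUnion.1 hx
      exact (mem_comps_aux G A A' hA').2 hxA'
    have hAn : A.card ≤ n := hX ▸ Finset.card_le_card hAX
    have hsum3 : (∑ A' ∈ C, (A'.card : ℝ)) ≤ n := by
      push_cast
      exact_mod_cast le_trans hsum2 hAn
    have : (C.card : ℝ) * ((d : ℝ) / 2) ≤ n := le_trans hsum1 hsum3
    rw [le_div_iff₀ hdpos]
    linarith
end
end

section
/- Let G be a d-regular bipartite graph with parts X and Y of size n, let \gamma > 0, and let t_0 \ge 1 be an integer. Suppose that |\mathcal{G}(w,t)| \le 2^{w - \gamma t} for all integers t \ge t_0 and all integers w with 1 \le w \le n. Then for every closed A \subseteq X, 1 \le \Xi_A \le \exp\big( n \cdot 2^{-\gamma t_0} / (1 - 2^{-\gamma}) \big). -/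
open scoped Classical

noncomputable section

variable {V : Type*}

variable [Fintype V] [DecidableEq V]

/-- if `|𝒢(w,t)| ≤ 2^{w-γt}` for all integers `t ≥ t₀` and
`1 ≤ w ≤ n`, then for every closed `A ⊆ X`,
`1 ≤ Ξ_A ≤ exp(n · 2^{-γt₀}/(1 - 2^{-γ}))`. -/
theorem stmt_13 (G : SimpleGraph V) (X Y : Finset V) (n d : ℕ)
    (hX : X.card = n) (hY : Y.card = n)
    (hbip : IsBipartiteWith G X Y) (hreg : IsRegularDeg G d)
    (γ : ℝ) (hγ : 0 < γ) (t0 : ℕ) (ht0 : 1 ≤ t0)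
    (hGG : ∀ t : ℤ, (t0 : ℤ) ≤ t → ∀ w : ℤ, 1 ≤ w → w ≤ (n : ℤ) →
      ((GG G X w t).card : ℝ) ≤ (2:ℝ) ^ ((w : ℝ) - γ * (t : ℝ)))
    (A : Finset V) (hAX : A ⊆ X) (hclosed : IsClosedSet G X A) :
    1 ≤ Xi G X (t0 : ℤ) A ∧
    Xi G X (t0 : ℤ) A ≤
      Real.exp ((n : ℝ) * (2:ℝ) ^ (-(γ * (t0 : ℝ))) / (1 - (2:ℝ) ^ (-γ))) := by
  classical
  set r : ℝ := (2:ℝ) ^ (-γ) with hr_def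
  have hr0 : 0 < r := Real.rpow_pos_of_pos (by norm_num) _
  have hr1 : r < 1 := Real.rpow_lt_one_of_one_lt_of_neg (by norm_num) (by linarith)
  have h1r : 0 < 1 - r := by linarith
  set f : Finset V → ℝ := fun B => ((2:ℝ) ^ (nbr G B).card)⁻¹ with hf_def
  have hfpos : ∀ B, 0 < f B := fun B => by positivity
  set P : Finset (Finset V) :=
    Finset.univ.filter (fun B => IsPolymerIn G X (t0:ℤ) A B) with hP_def
  set κ : Finset V → ℕ × ℕ :=
    fun B => ((nbr G B).card, (nbr G B).card - (cl G X B).card) with hκ_def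
  -- basic facts about polymers in P
  have hBfacts : ∀ B ∈ P, B ⊆ X ∧ 1 ≤ (cl G X B).card ∧
      (cl G X B).card + t0 ≤ (nbr G B).card ∧ (nbr G B).card ≤ n := by
    intro B hB
    simp only [hP_def, Finset.mem_filter, Finset.mem_univ, true_and] at hB
    obtain ⟨hne, htl, hsub, hnc⟩ := hB
    have hBX : B ⊆ X := hsub.trans Finset.sdiff_subset
    have hBcl : B ⊆ cl G X B := by
      intro x hx
      simp only [cl, Finset.mem_filter]
      refine ⟨hBX hx, ?_⟩
      intro u hu
      simp only [nbrF, Finset.mem_filter, Finset.mem_univ, true_and] at hu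
      simp only [nbr, Finset.mem_filter, Finset.mem_univ, true_and]
      exact ⟨x, hx, hu⟩
    have h1 : 1 ≤ (cl G X B).card := by
      obtain ⟨x, hx⟩ := hne
      exact Finset.card_pos.mpr ⟨x, hBcl hx⟩
    have h2 : ((cl G X B).card : ℤ) + (t0:ℤ) ≤ ((nbr G B).card : ℤ) := by
      simpa [Contracting, not_lt] using hnc
    have h2' : (cl G X B).card + t0 ≤ (nbr G B).card := by exact_mod_cast h2
    have hNY : nbr G B ⊆ Y := by
      intro u hu
      simp only [nbr, Finset.mem_filter, Finset.mem_univ, true_and] at hu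
      obtain ⟨a, haB, hadj⟩ := hu
      rcases hbip.2.2 a u hadj with ⟨-, huY⟩ | ⟨haY, -⟩
      · exact huY
      · exact absurd haY (Finset.disjoint_left.mp hbip.1 (hBX haB))
    exact ⟨hBX, h1, h2', hY ▸ Finset.card_le_card hNY⟩
  have hmaps : ∀ B ∈ P, κ B ∈ (Finset.Icc 1 n) ×ˢ (Finset.Icc t0 n) := by
    intro B hB
    obtain ⟨-, h1, h2, h3⟩ := hBfacts B hB
    simp only [hκ_def, Finset.mem_product, Finset.mem_Icc]
    omega
  -- fiber sums
  have hfiber : ∀ p ∈ (Finset.Icc 1 n) ×ˢ (Finset.Icc t0 n),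
      (∑ B ∈ P.filter (fun B => κ B = p), f B) ≤ r ^ p.2 := by
    intro p hp
    obtain ⟨hw, ht⟩ := Finset.mem_product.mp hp
    rw [Finset.mem_Icc] at hw ht
    have hsub : P.filter (fun B => κ B = p) ⊆ GG G X (p.1 : ℤ) (p.2 : ℤ) := by
      intro B hB
      rw [Finset.mem_filter] at hB
      obtain ⟨hBP, hκ⟩ := hB
      obtain ⟨hBX, h1, h2, h3⟩ := hBfacts B hBP
      simp only [hP_def, Finset.mem_filter, Finset.mem_univ, true_and] at hBP
      obtain ⟨hne, htl, -, -⟩ := hBP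
      have hκ1 : (nbr G B).card = p.1 := congrArg Prod.fst hκ
      have hκ2 : (nbr G B).card - (cl G X B).card = p.2 := congrArg Prod.snd hκ
      simp only [GG, Finset.mem_filter, Finset.mem_powerset]
      refine ⟨hBX, hne, htl, by exact_mod_cast hκ1, ?_⟩
      omega
    have hcardeq : ∀ B ∈ P.filter (fun B => κ B = p), f B = ((2:ℝ) ^ p.1)⁻¹ := by
      intro B hB
      rw [Finset.mem_filter] at hB
      have hκ1 : (nbr G B).card = p.1 := congrArg Prod.fst hB.2
      simp [hf_def, hκ1]
    have hGGcard : ((GG G X (p.1 : ℤ) (p.2 : ℤ)).card : ℝ) ≤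
        (2:ℝ) ^ ((p.1 : ℝ) - γ * (p.2 : ℝ)) := by
      have := hGG (p.2 : ℤ) (by exact_mod_cast ht.1) (p.1 : ℤ)
        (by exact_mod_cast hw.1) (by exact_mod_cast hw.2)
      simpa using this
    have hpow_ne : ((2:ℝ) ^ p.1) ≠ 0 := by positivity
    calc ∑ B ∈ P.filter (fun B => κ B = p), f B
        = (P.filter (fun B => κ B = p)).card * ((2:ℝ) ^ p.1)⁻¹ := by
          rw [Finset.sum_congr rfl hcardeq, Finset.sum_const, nsmul_eq_mul]
      _ ≤ ((GG G X (p.1 : ℤ) (p.2 : ℤ)).card : ℝ) * ((2:ℝ) ^ p.1)⁻¹ := by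
          have : ((P.filter (fun B => κ B = p)).card : ℝ) ≤
            ((GG G X (p.1 : ℤ) (p.2 : ℤ)).card : ℝ) := by
            exact_mod_cast Finset.card_le_card hsub
          gcongr
          
      _ ≤ (2:ℝ) ^ ((p.1 : ℝ) - γ * (p.2 : ℝ)) * ((2:ℝ) ^ p.1)⁻¹ := by
          gcongr
      _ = r ^ p.2 := by
          rw [Real.rpow_sub (by norm_num), hr_def,
            ← Real.rpow_natCast ((2:ℝ) ^ (-γ:ℝ)) p.2, ← Real.rpow_mul (by norm_num)]
          rw [show (-γ) * (p.2:ℝ) = -(γ * (p.2:ℝ)) by ring, Real.rpow_neg (by norm_num),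
            ← Real.rpow_natCast (2:ℝ) p.1]
          field_simp
    -- end calc
  -- geometric sum bound
  have hgeom : ∑ t ∈ Finset.Icc t0 n, r ^ t ≤ r ^ t0 / (1 - r) := by
    by_cases hn : t0 ≤ n + 1
    · rw [← Finset.Ico_add_one_right_eq_Icc, geom_sum_Ico (ne_of_lt hr1) hn]
      have heq : (r ^ (n+1) - r ^ t0) / (r - 1) = (r ^ t0 - r ^ (n+1)) / (1 - r) := by
        rw [div_eq_div_iff (by linarith) (by linarith)]; ring
      rw [heq, div_le_div_iff_of_pos_right h1r]
      nlinarith [pow_nonneg hr0.le (n+1)]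
    · rw [Finset.Icc_eq_empty (by omega)]
      simp only [Finset.sum_empty]
      positivity
  -- the total weight bound
  have hS : ∑ B ∈ P, f B ≤ (n:ℝ) * (r ^ t0 / (1 - r)) := by
    calc ∑ B ∈ P, f B
        = ∑ p ∈ (Finset.Icc 1 n) ×ˢ (Finset.Icc t0 n),
            ∑ B ∈ P.filter (fun B => κ B = p), f B :=
          (Finset.sum_fiberwise_of_maps_to hmaps f).symm
      _ ≤ ∑ p ∈ (Finset.Icc 1 n) ×ˢ (Finset.Icc t0 n), r ^ p.2 :=
          Finset.sum_le_sum hfiber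
      _ = ∑ w ∈ Finset.Icc 1 n, ∑ t ∈ Finset.Icc t0 n, r ^ t := by
          rw [Finset.sum_product]
      _ = (n:ℝ) * ∑ t ∈ Finset.Icc t0 n, r ^ t := by
          rw [Finset.sum_const, Nat.card_Icc, nsmul_eq_mul]
          norm_num
      _ ≤ (n:ℝ) * (r ^ t0 / (1 - r)) := by
          exact mul_le_mul_of_nonneg_left hgeom (by positivity)
  have hrt0 : r ^ t0 = (2:ℝ) ^ (-(γ * (t0:ℝ))) := by
    rw [hr_def, ← Real.rpow_natCast ((2:ℝ) ^ (-γ:ℝ)) t0, ← Real.rpow_mul (by norm_num)]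
    ring_nf
  constructor
  · -- lower bound
    have hEmpty : (∅ : Finset (Finset V)) ∈ Finset.univ.filter (fun F : Finset (Finset V) =>
        (∀ B ∈ F, IsPolymerIn G X (t0:ℤ) A B) ∧
        (∀ B ∈ F, ∀ B' ∈ F, B ≠ B' → Disjoint (nbr G B) (nbr G B'))) := by simp
    have hle := Finset.single_le_sum
      (f := fun F : Finset (Finset V) => ∏ B ∈ F, ((2:ℝ) ^ (nbr G B).card)⁻¹)
      (fun F _ => Finset.prod_nonneg fun B _ => by positivity) hEmpty
    simpa [Xi] using hle
  · -- upper bound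
    have step1 : Xi G X (t0:ℤ) A ≤ ∑ F ∈ P.powerset, ∏ B ∈ F, f B := by
      unfold Xi
      apply Finset.sum_le_sum_of_subset_of_nonneg
      · intro F hF
        simp only [Finset.mem_filter, Finset.mem_univ, true_and] at hF
        rw [Finset.mem_powerset]
        intro B hB
        simp only [hP_def, Finset.mem_filter, Finset.mem_univ, true_and]
        exact hF.1 B hB
      · intro F _ _
        exact Finset.prod_nonneg fun B _ => by positivity
    have step2 : (∑ F ∈ P.powerset, ∏ B ∈ F, f B) = ∏ B ∈ P, (f B + 1) := by
      rw [Finset.prod_add]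
      simp
    have step3 : ∏ B ∈ P, (f B + 1) ≤ Real.exp (∑ B ∈ P, f B) := by
      rw [Real.exp_sum]
      refine Finset.prod_le_prod (fun B _ => by positivity) (fun B _ => ?_)
      have := Real.add_one_le_exp (f B)
      linarith
    calc Xi G X (t0:ℤ) A ≤ ∑ F ∈ P.powerset, ∏ B ∈ F, f B := step1
      _ = ∏ B ∈ P, (f B + 1) := step2
      _ ≤ Real.exp (∑ B ∈ P, f B) := step3
      _ ≤ Real.exp ((n : ℝ) * (2:ℝ) ^ (-(γ * (t0 : ℝ))) / (1 - (2:ℝ) ^ (-γ))) := by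
          rw [Real.exp_le_exp]
          calc ∑ B ∈ P, f B ≤ (n:ℝ) * (r ^ t0 / (1 - r)) := hS
            _ = (n : ℝ) * (2:ℝ) ^ (-(γ * (t0 : ℝ))) / (1 - (2:ℝ) ^ (-γ)) := by
                rw [hrt0, hr_def, mul_div_assoc]
end
end

section
/- For each \delta \in (0,1) and each \gamma' > 0 there is a constant K = K(\delta,\gamma') such that for all sufficiently large n the following holds. Let d = \lfloor\delta n\rfloor and let G be a d-regular bipartite graph with parts X and Y of size n. Then for every set F \subseteq Y there is a family \mathcal{C} \subseteq 2^X \times 2^Y with |\mathcal{C}| \le n^{K} such that every A \subseteq X with |N(A)| - |[A]| \le \log^4 n for which F is an essential set has a \gamma'-container in \mathcal{C}. -/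
open scoped Classical

noncomputable section

variable {V : Type*}

variable [Fintype V] [DecidableEq V]

set_option linter.unusedSectionVars false
set_option linter.unusedVariables false
set_option linter.dupNamespace false
set_option linter.unusedTactic false
set_option maxHeartbeats 1000000

namespace Stmt16

variable {V : Type*} [Fintype V] [DecidableEq V]

lemma mem_nbrF {G : SimpleGraph V} {v u : V} : u ∈ nbrF G v ↔ G.Adj v u := by
  simp [nbrF]

lemma mem_nbr {G : SimpleGraph V} {A : Finset V} {u : V} :
    u ∈ nbr G A ↔ ∃ a ∈ A, G.Adj a u := by
  simp [nbr]

lemma nbrF_comm {G : SimpleGraph V} {v u : V} : u ∈ nbrF G v ↔ v ∈ nbrF G u := by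
  rw [mem_nbrF, mem_nbrF, G.adj_comm]

lemma nbrF_subset_Y {G : SimpleGraph V} {X Y : Finset V}
    (hbip : IsBipartiteWith G X Y) {x : V} (hx : x ∈ X) : nbrF G x ⊆ Y := by
  intro u hu
  rcases hbip.2.2 x u (mem_nbrF.1 hu) with ⟨_, h⟩ | ⟨h, _⟩
  · exact h
  · exact absurd hx (Finset.disjoint_right.1 hbip.1 h)

lemma nbrF_subset_X {G : SimpleGraph V} {X Y : Finset V}
    (hbip : IsBipartiteWith G X Y) {y : V} (hy : y ∈ Y) : nbrF G y ⊆ X := by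
  intro u hu
  rcases hbip.2.2 y u (mem_nbrF.1 hu) with ⟨h, _⟩ | ⟨_, h⟩
  · exact absurd hy (Finset.disjoint_left.1 hbip.1 h)
  · exact h

lemma subset_cl {G : SimpleGraph V} {X A : Finset V} (hA : A ⊆ X) : A ⊆ cl G X A := by
  intro a ha
  refine Finset.mem_filter.2 ⟨hA ha, ?_⟩
  intro u hu
  exact mem_nbr.2 ⟨a, ha, mem_nbrF.1 hu⟩

lemma cl_subset {G : SimpleGraph V} {X A : Finset V} : cl G X A ⊆ X :=
  Finset.filter_subset _ _

lemma nbrF_subset_W {G : SimpleGraph V} {X A : Finset V} {x : V}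
    (hx : x ∈ cl G X A) : nbrF G x ⊆ nbr G A :=
  (Finset.mem_filter.1 hx).2

lemma W_subset_Y {G : SimpleGraph V} {X Y A : Finset V}
    (hbip : IsBipartiteWith G X Y) (hA : A ⊆ X) : nbr G A ⊆ Y := by
  intro u hu
  rcases mem_nbr.1 hu with ⟨a, ha, hadj⟩
  exact nbrF_subset_Y hbip (hA ha) (mem_nbrF.2 hadj)

lemma exists_C_nbr {G : SimpleGraph V} {X A : Finset V} (hA : A ⊆ X) {y : V}
    (hy : y ∈ nbr G A) : (nbrF G y ∩ cl G X A).Nonempty := by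
  rcases mem_nbr.1 hy with ⟨a, ha, hadj⟩
  exact ⟨a, Finset.mem_inter.2 ⟨nbrF_comm.1 (mem_nbrF.2 hadj), subset_cl hA ha⟩⟩

/-- Double counting of edges between two sets. -/
lemma dc (G : SimpleGraph V) (s t : Finset V) :
    ∑ x ∈ s, (nbrF G x ∩ t).card = ∑ y ∈ t, (nbrF G y ∩ s).card := by
  have h : ∀ (a b : Finset V), ∀ x : V, (nbrF G x ∩ b).card
      = ∑ y ∈ b, if G.Adj x y then 1 else 0 := by
    intro a b x
    rw [← Finset.card_filter]
    congr 1
    ext y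
    simp [mem_nbrF, and_comm]
  calc ∑ x ∈ s, (nbrF G x ∩ t).card
      = ∑ x ∈ s, ∑ y ∈ t, if G.Adj x y then 1 else 0 := by
        exact Finset.sum_congr rfl fun x _ => h s t x
    _ = ∑ y ∈ t, ∑ x ∈ s, if G.Adj x y then 1 else 0 := Finset.sum_comm
    _ = ∑ y ∈ t, (nbrF G y ∩ s).card := by
        refine Finset.sum_congr rfl fun y _ => ?_
        rw [h t s y]
        refine Finset.sum_congr rfl fun x _ => ?_
        rw [G.adj_comm]

/-- The budget identity: `∑_{y ∈ W} |N(y) \ C| + d|C| = d|W|`. -/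
lemma budget {G : SimpleGraph V} {X A : Finset V} {d : ℕ}
    (hreg : IsRegularDeg G d) (hA : A ⊆ X) :
    (∑ y ∈ nbr G A, (nbrF G y \ cl G X A).card) + d * (cl G X A).card
      = d * (nbr G A).card := by
  have h1 : ∑ y ∈ nbr G A, (nbrF G y ∩ cl G X A).card = d * (cl G X A).card := by
    rw [← dc]
    rw [Finset.sum_congr rfl fun x hx => ?_]
    · rw [Finset.sum_const, smul_eq_mul, mul_comm]
    · have : nbrF G x ∩ nbr G A = nbrF G x :=
        Finset.inter_eq_left.2 (nbrF_subset_W hx)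
      rw [this, hreg x]
  have h2 : ∀ y ∈ nbr G A, (nbrF G y \ cl G X A).card + (nbrF G y ∩ cl G X A).card = d := by
    intro y _
    rw [Finset.card_sdiff_add_card_inter, hreg y]
  calc (∑ y ∈ nbr G A, (nbrF G y \ cl G X A).card) + d * (cl G X A).card
      = ∑ y ∈ nbr G A, ((nbrF G y \ cl G X A).card + (nbrF G y ∩ cl G X A).card) := by
        rw [Finset.sum_add_distrib, h1]
    _ = ∑ y ∈ nbr G A, d := Finset.sum_congr rfl h2
    _ = d * (nbr G A).card := by rw [Finset.sum_const, smul_eq_mul, mul_comm]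

lemma card_cl_le_card_nbr {G : SimpleGraph V} {X A : Finset V} {d : ℕ}
    (hreg : IsRegularDeg G d) (hA : A ⊆ X) (hd : 0 < d) :
    (cl G X A).card ≤ (nbr G A).card := by
  have := budget (X := X) (A := A) hreg hA
  have h : d * (cl G X A).card ≤ d * (nbr G A).card := by omega
  exact Nat.le_of_mul_le_mul_left h hd

end Stmt16
namespace Stmt16

variable {V : Type*} [Fintype V] [DecidableEq V]

/-- Deficiency counting: if every `y ∈ B ⊆ W` has at most `θ` neighbours in the
closure, then `|B| (d - θ) ≤ d|W| - d|C|`. -/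
lemma defic_bound {G : SimpleGraph V} {X A : Finset V} {d : ℕ}
    (hreg : IsRegularDeg G d) (hA : A ⊆ X) (B : Finset V) (θ : ℝ)
    (hBW : B ⊆ nbr G A)
    (h : ∀ y ∈ B, ((nbrF G y ∩ cl G X A).card : ℝ) ≤ θ) :
    (B.card : ℝ) * ((d : ℝ) - θ)
      ≤ (d : ℝ) * (nbr G A).card - (d : ℝ) * (cl G X A).card := by
  set C := cl G X A
  have hpt : ∀ y ∈ B, (d : ℝ) - θ ≤ ((nbrF G y \ C).card : ℝ) := by
    intro y hy
    have hsum : ((nbrF G y \ C).card : ℕ) + (nbrF G y ∩ C).card = d := by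
      rw [Finset.card_sdiff_add_card_inter, hreg y]
    have : ((nbrF G y \ C).card : ℝ) + ((nbrF G y ∩ C).card : ℝ) = (d : ℝ) := by
      exact_mod_cast congrArg (fun k : ℕ => (k : ℝ)) hsum
    have := h y hy
    linarith
  have h1 : (B.card : ℝ) * ((d : ℝ) - θ) ≤ ∑ y ∈ B, ((nbrF G y \ C).card : ℝ) := by
    have := Finset.card_nsmul_le_sum B (fun y => ((nbrF G y \ C).card : ℝ))
      ((d : ℝ) - θ) hpt
    rwa [nsmul_eq_mul] at this
  have h2 : ∑ y ∈ B, ((nbrF G y \ C).card : ℝ)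
      ≤ ∑ y ∈ nbr G A, ((nbrF G y \ C).card : ℝ) := by
    refine Finset.sum_le_sum_of_subset_of_nonneg hBW ?_
    intro y _ _; positivity
  have h3 : ∑ y ∈ nbr G A, ((nbrF G y \ C).card : ℝ)
      = (d : ℝ) * (nbr G A).card - (d : ℝ) * C.card := by
    have := budget (G := G) (X := X) (A := A) (d := d) hreg hA
    have hc : ((∑ y ∈ nbr G A, (nbrF G y \ C).card : ℕ) : ℝ)
        + (d : ℝ) * C.card = (d : ℝ) * (nbr G A).card := by
      exact_mod_cast congrArg (fun k : ℕ => (k : ℝ)) this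
    push_cast at hc ⊢
    linarith
  linarith

/-- Junk counting: if `T ⊆ W` and every `x ∈ S ⊆ X` has at most `θ` neighbours
outside `T`, then `|S \ C| (d - θ) ≤ d|W| - d|C|`. -/
lemma junk_bound {G : SimpleGraph V} {X Y A : Finset V} {d : ℕ}
    (hbip : IsBipartiteWith G X Y) (hreg : IsRegularDeg G d) (hA : A ⊆ X)
    (S T : Finset V) (θ : ℝ) (hTW : T ⊆ nbr G A) (hSX : S ⊆ X)
    (hS : ∀ x ∈ S, ((nbrF G x \ T).card : ℝ) ≤ θ) :
    (((S \ cl G X A).card : ℝ)) * ((d : ℝ) - θ)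
      ≤ (d : ℝ) * (nbr G A).card - (d : ℝ) * (cl G X A).card := by
  set C := cl G X A with hC
  set W := nbr G A with hW
  have hpt : ∀ x ∈ S \ C, (d : ℝ) - θ ≤ ((nbrF G x ∩ W).card : ℝ) := by
    intro x hx
    have hxS : x ∈ S := (Finset.mem_sdiff.1 hx).1
    have hsub : nbrF G x \ W ⊆ nbrF G x \ T := by
      exact Finset.sdiff_subset_sdiff (le_refl _) hTW
    have hc1 : ((nbrF G x \ W).card : ℝ) ≤ θ :=
      le_trans (by exact_mod_cast Nat.cast_le.2 (Finset.card_le_card hsub)) (hS x hxS)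
    have hsum : (nbrF G x \ W).card + (nbrF G x ∩ W).card = d := by
      rw [Finset.card_sdiff_add_card_inter, hreg x]
    have : ((nbrF G x \ W).card : ℝ) + ((nbrF G x ∩ W).card : ℝ) = (d : ℝ) := by
      exact_mod_cast congrArg (fun k : ℕ => (k : ℝ)) hsum
    linarith
  have h1 : (((S \ C).card : ℝ)) * ((d : ℝ) - θ)
      ≤ ∑ x ∈ S \ C, ((nbrF G x ∩ W).card : ℝ) := by
    have := Finset.card_nsmul_le_sum (S \ C) (fun x => ((nbrF G x ∩ W).card : ℝ))
      ((d : ℝ) - θ) hpt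
    rwa [nsmul_eq_mul] at this
  have hsub2 : S \ C ⊆ X \ C := Finset.sdiff_subset_sdiff hSX (le_refl _)
  have h2 : ∑ x ∈ S \ C, ((nbrF G x ∩ W).card : ℝ)
      ≤ ∑ x ∈ X \ C, ((nbrF G x ∩ W).card : ℝ) := by
    refine Finset.sum_le_sum_of_subset_of_nonneg hsub2 ?_
    intro y _ _; positivity
  have h3 : ∑ x ∈ X \ C, (nbrF G x ∩ W).card = ∑ y ∈ W, (nbrF G y ∩ (X \ C)).card :=
    dc G (X \ C) W
  have h4 : ∀ y ∈ W, nbrF G y ∩ (X \ C) = nbrF G y \ C := by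
    intro y hy
    have hyY : y ∈ Y := W_subset_Y hbip hA hy
    ext u
    simp only [Finset.mem_inter, Finset.mem_sdiff]
    constructor
    · rintro ⟨h1, _, h3⟩; exact ⟨h1, h3⟩
    · rintro ⟨h1, h2⟩; exact ⟨h1, nbrF_subset_X hbip hyY h1, h2⟩
  have h5 : ∑ y ∈ W, (nbrF G y ∩ (X \ C)).card = ∑ y ∈ W, (nbrF G y \ C).card :=
    Finset.sum_congr rfl fun y hy => by rw [h4 y hy]
  have h6 : ∑ y ∈ W, ((nbrF G y \ C).card) + d * C.card = d * W.card :=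
    budget hreg hA
  have h7 : ∑ x ∈ X \ C, ((nbrF G x ∩ W).card : ℝ)
      = (d : ℝ) * W.card - (d : ℝ) * C.card := by
    have : ((∑ x ∈ X \ C, (nbrF G x ∩ W).card : ℕ) : ℝ)
        = ((∑ y ∈ W, (nbrF G y \ C).card : ℕ) : ℝ) := by
      rw [h3, h5]
    have hc : ((∑ y ∈ W, (nbrF G y \ C).card : ℕ) : ℝ) + (d : ℝ) * C.card
        = (d : ℝ) * W.card := by exact_mod_cast congrArg (fun k : ℕ => (k : ℝ)) h6
    push_cast at this hc ⊢
    linarith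
  linarith

end Stmt16
namespace Stmt16

variable {V : Type*} [Fintype V] [DecidableEq V]

/-- Bootstrap covering: there is a small `L ⊆ C` whose neighbourhoods cover all
but `d/2` of `W`. -/
lemma exists_cover {G : SimpleGraph V} {X A : Finset V} {d n p : ℕ}
    (hreg : IsRegularDeg G d) (hA : A ⊆ X)
    (hWn : (nbr G A).card ≤ n) (hCn : (cl G X A).card ≤ n)
    (hn : 0 < n) (hd : 0 < d)
    (ht : 8 * (((nbr G A).card : ℝ) - ((cl G X A).card : ℝ)) ≤ (d : ℝ))
    (hp : 8 * (n : ℝ) * n ≤ (p : ℝ) * d * d) :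
    ∃ L : Finset V, L ⊆ cl G X A ∧ L.card ≤ p ∧
      ((nbr G A \ L.biUnion (nbrF G)).card : ℝ) ≤ (d : ℝ) / 2 := by
  set C := cl G X A with hCdef
  set W := nbr G A with hWdef
  set tR : ℝ := ((W.card : ℝ) - (C.card : ℝ)) with htRdef
  have htR0 : 0 ≤ tR := by
    have := card_cl_le_card_nbr (X := X) (A := A) hreg hA hd
    have : (C.card : ℝ) ≤ (W.card : ℝ) := by exact_mod_cast this
    simp only [htRdef]; linarith
  set c0 : ℝ := (d : ℝ) * d / (8 * n) with hc0def
  have hdR : (0 : ℝ) < d := by exact_mod_cast hd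
  have hnR : (0 : ℝ) < n := by exact_mod_cast hn
  have hc0pos : 0 < c0 := by positivity
  have aux : ∀ m : ℕ, ∃ L : Finset V, L ⊆ C ∧ L.card ≤ m ∧
      (((W \ L.biUnion (nbrF G)).card : ℝ) ≤ (d : ℝ) / 2 ∨
       ((W \ L.biUnion (nbrF G)).card : ℝ) ≤ (n : ℝ) - m * c0) := by
    intro m
    induction m with
    | zero =>
      refine ⟨∅, Finset.empty_subset _, le_refl _, Or.inr ?_⟩
      simp only [Finset.biUnion_empty, Finset.sdiff_empty, Nat.cast_zero, zero_mul,
        sub_zero]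
      exact_mod_cast hWn
    | succ m ih =>
      obtain ⟨L, hLC, hLm, hcase⟩ := ih
      rcases hcase with hdone | hrec
      · exact ⟨L, hLC, hLm.trans (Nat.le_succ m), Or.inl hdone⟩
      by_cases hsm : ((W \ L.biUnion (nbrF G)).card : ℝ) ≤ (d : ℝ) / 2
      · exact ⟨L, hLC, hLm.trans (Nat.le_succ m), Or.inl hsm⟩
      push_neg at hsm
      set U := W \ L.biUnion (nbrF G) with hUdef
      have hUW : U ⊆ W := Finset.sdiff_subset
      set Usm := U.filter (fun y => ((nbrF G y ∩ C).card : ℝ) < (d : ℝ) / 2) with hUsmdef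
      have husm : ((Usm.card : ℝ)) * ((d : ℝ) - (d : ℝ) / 2)
          ≤ (d : ℝ) * W.card - (d : ℝ) * C.card := by
        refine defic_bound hreg hA Usm ((d : ℝ) / 2)
          ((Finset.filter_subset _ _).trans hUW) ?_
        intro y hy
        exact le_of_lt (Finset.mem_filter.1 hy).2
      have husm' : (Usm.card : ℝ) ≤ 2 * tR := by
        have hWCr : (d : ℝ) * W.card - (d : ℝ) * C.card = d * tR := by
          simp only [htRdef]; ring
      -- Usm.card * (d/2) ≤ d * tR
        rw [hWCr] at husm
        nlinarith
      -- lower bound on the edge count between U and C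
      have hUUsm : ((d : ℝ) / 4) < ((U \ Usm).card : ℝ) := by
        have h1 : (U \ Usm).card + (U ∩ Usm).card = U.card :=
          Finset.card_sdiff_add_card_inter U Usm
        have h2 : (U ∩ Usm).card ≤ Usm.card :=
          Finset.card_le_card Finset.inter_subset_right
        have h3 : ((U \ Usm).card : ℝ) + (Usm.card : ℝ) ≥ (U.card : ℝ) := by
          have := congrArg (fun k : ℕ => (k : ℝ)) h1
          push_cast at this
          have h2' : ((U ∩ Usm).card : ℝ) ≤ (Usm.card : ℝ) := by exact_mod_cast h2
          linarith
        linarith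
      have key : (d : ℝ) * d / 8 < ∑ y ∈ U, ((nbrF G y ∩ C).card : ℝ) := by
        have hpt : ∀ y ∈ U \ Usm, (d : ℝ) / 2 ≤ ((nbrF G y ∩ C).card : ℝ) := by
          intro y hy
          have hyU : y ∈ U := (Finset.mem_sdiff.1 hy).1
          have hyn : y ∉ Usm := (Finset.mem_sdiff.1 hy).2
          by_contra hlt
          push_neg at hlt
          exact hyn (Finset.mem_filter.2 ⟨hyU, hlt⟩)
        have h1 : (((U \ Usm).card : ℝ)) * ((d : ℝ) / 2)
            ≤ ∑ y ∈ U \ Usm, ((nbrF G y ∩ C).card : ℝ) := by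
          have := Finset.card_nsmul_le_sum (U \ Usm)
            (fun y => ((nbrF G y ∩ C).card : ℝ)) ((d : ℝ) / 2) hpt
          rwa [nsmul_eq_mul] at this
        have h2 : ∑ y ∈ U \ Usm, ((nbrF G y ∩ C).card : ℝ)
            ≤ ∑ y ∈ U, ((nbrF G y ∩ C).card : ℝ) := by
          refine Finset.sum_le_sum_of_subset_of_nonneg Finset.sdiff_subset ?_
          intro y _ _; positivity
        nlinarith
      -- find a high-degree vertex of C
      have hCne : C.Nonempty := by
        have hUcard : (0 : ℝ) < (U.card : ℝ) := lt_trans (by positivity) hsm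
        have hUne : U.Nonempty := Finset.card_pos.1 (by exact_mod_cast hUcard)
        obtain ⟨y, hy⟩ := hUne
        obtain ⟨x, hx⟩ := exists_C_nbr hA (hUW hy)
        exact ⟨x, (Finset.mem_inter.1 hx).2⟩
      have hex : ∃ x ∈ C, c0 ≤ ((nbrF G x ∩ U).card : ℝ) := by
        by_contra hno
        push_neg at hno
        have h1 : ∑ x ∈ C, ((nbrF G x ∩ U).card : ℝ) ≤ (C.card : ℝ) * c0 := by
          have := Finset.sum_le_card_nsmul C (fun x => ((nbrF G x ∩ U).card : ℝ)) c0
            (fun x hx => le_of_lt (hno x hx))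
          rwa [nsmul_eq_mul] at this
        have h2 : ∑ x ∈ C, ((nbrF G x ∩ U).card : ℝ)
            = ∑ y ∈ U, ((nbrF G y ∩ C).card : ℝ) := by
          have := dc G C U
          exact_mod_cast congrArg (fun k : ℕ => (k : ℝ)) this
        have h3 : (C.card : ℝ) * c0 ≤ (n : ℝ) * c0 := by
          have : (C.card : ℝ) ≤ (n : ℝ) := by exact_mod_cast hCn
          nlinarith
        have h4 : (n : ℝ) * c0 = (d : ℝ) * d / 8 := by
          rw [hc0def]; field_simp
        rw [h2] at h1
        rw [h4] at h3
        linarith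
      obtain ⟨x, hxC, hxdeg⟩ := hex
      refine ⟨insert x L, Finset.insert_subset hxC hLC, ?_, Or.inr ?_⟩
      · exact (Finset.card_insert_le _ _).trans (Nat.succ_le_succ hLm)
      have hU' : W \ ((insert x L).biUnion (nbrF G)) = U \ nbrF G x := by
        ext u
        simp only [hUdef, Finset.mem_sdiff, Finset.mem_biUnion, Finset.mem_insert]
        constructor
        · rintro ⟨huW, hnb⟩
          exact ⟨⟨huW, fun ⟨a, ha, hua⟩ => hnb ⟨a, Or.inr ha, hua⟩⟩,
            fun hux => hnb ⟨x, Or.inl rfl, hux⟩⟩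
        · rintro ⟨⟨huW, hnb⟩, hux⟩
          refine ⟨huW, ?_⟩
          rintro ⟨a, (rfl | ha), hua⟩
          · exact hux hua
          · exact hnb ⟨a, ha, hua⟩
      rw [hU']
      have h1 : (U \ nbrF G x).card + (U ∩ nbrF G x).card = U.card :=
        Finset.card_sdiff_add_card_inter U (nbrF G x)
      have h2 : ((nbrF G x ∩ U).card : ℝ) = ((U ∩ nbrF G x).card : ℝ) := by
        rw [Finset.inter_comm]
      have h3 : ((U \ nbrF G x).card : ℝ) + ((U ∩ nbrF G x).card : ℝ) = (U.card : ℝ) := by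
        exact_mod_cast congrArg (fun k : ℕ => (k : ℝ)) h1
      push_cast
      have : ((U.card : ℝ)) ≤ (n : ℝ) - m * c0 := hrec
      linarith
  obtain ⟨L, hLC, hLp, hcase⟩ := aux p
  refine ⟨L, hLC, hLp, ?_⟩
  rcases hcase with h | h
  · exact h
  · have hfin : (n : ℝ) ≤ p * c0 := by
      have hc : (p : ℝ) * c0 = (p * d * d) / (8 * n) := by rw [hc0def]; ring
      rw [hc, le_div_iff₀ (by positivity)]
      nlinarith
    have : (0 : ℝ) ≤ (d : ℝ) / 2 := by positivity
    linarith
end Stmt16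
namespace Stmt16

variable {V : Type*} [Fintype V] [DecidableEq V]

/-- Thin-phase greedy: a few closure vertices' neighbourhoods can be added to
`T₁` so that afterwards every closure vertex has few neighbours outside. -/
lemma exists_thin {G : SimpleGraph V} {X A : Finset V} {q : ℕ} {γ' tR : ℝ}
    (hγ : 0 < γ') (htR0 : 0 ≤ tR) (T₁ : Finset V)
    (hU1 : ((nbr G A \ T₁).card : ℝ) ≤ tR + 1)
    (hq : tR + 2 ≤ (q : ℝ) * max (γ' * tR) 1) :
    ∃ L : Finset V, L ⊆ cl G X A ∧ L.card ≤ q ∧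
      ∀ x ∈ cl G X A, ((nbrF G x \ (T₁ ∪ L.biUnion (nbrF G))).card : ℝ) ≤ γ' * tR := by
  set C := cl G X A with hCdef
  set W := nbr G A with hWdef
  set c : ℝ := max (γ' * tR) 1 with hcdef
  have hc1 : (1 : ℝ) ≤ c := le_max_right _ _
  have aux : ∀ m : ℕ, ∃ L : Finset V, L ⊆ C ∧ L.card ≤ m ∧
      ((∀ x ∈ C, ((nbrF G x \ (T₁ ∪ L.biUnion (nbrF G))).card : ℝ) ≤ γ' * tR) ∨
        (((W \ (T₁ ∪ L.biUnion (nbrF G))).card : ℝ) ≤ (tR + 1) - m * c)) := by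
    intro m
    induction m with
    | zero =>
      refine ⟨∅, Finset.empty_subset _, le_refl _, Or.inr ?_⟩
      simp only [Finset.biUnion_empty, Finset.union_empty, Nat.cast_zero, zero_mul,
        sub_zero]
      exact hU1
    | succ m ih =>
      obtain ⟨L, hLC, hLm, hcase⟩ := ih
      rcases hcase with hdone | hrec
      · exact ⟨L, hLC, hLm.trans (Nat.le_succ m), Or.inl hdone⟩
      by_cases hgoal : ∀ x ∈ C, ((nbrF G x \ (T₁ ∪ L.biUnion (nbrF G))).card : ℝ) ≤ γ' * tR
      · exact ⟨L, hLC, hLm.trans (Nat.le_succ m), Or.inl hgoal⟩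
      push_neg at hgoal
      obtain ⟨x, hxC, hxbad⟩ := hgoal
      set U := W \ (T₁ ∪ L.biUnion (nbrF G)) with hUdef
      set Rx := nbrF G x \ (T₁ ∪ L.biUnion (nbrF G)) with hRxdef
      have hRxU : Rx ⊆ U := Finset.sdiff_subset_sdiff (nbrF_subset_W hxC) (le_refl _)
      have hRxc : c ≤ (Rx.card : ℝ) := by
        have h1 : γ' * tR < (Rx.card : ℝ) := hxbad
        have h2 : (1 : ℝ) ≤ (Rx.card : ℝ) := by
          have : 0 < Rx.card := by
            by_contra h
            push_neg at h
            have : Rx.card = 0 := by omega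
            rw [this] at h1
            simp only [Nat.cast_zero] at h1
            nlinarith
          exact_mod_cast this
        exact max_le (le_of_lt h1) h2
      refine ⟨insert x L, Finset.insert_subset hxC hLC,
        (Finset.card_insert_le _ _).trans (Nat.succ_le_succ hLm), Or.inr ?_⟩
      have hU' : W \ (T₁ ∪ (insert x L).biUnion (nbrF G)) = U \ nbrF G x := by
        ext u
        simp only [hUdef, Finset.mem_sdiff, Finset.mem_union, Finset.mem_biUnion,
          Finset.mem_insert]
        constructor
        · rintro ⟨huW, hnb⟩
          push_neg at hnb
          obtain ⟨h1, h2⟩ := hnb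
          exact ⟨⟨huW, by push_neg; exact ⟨h1, fun a ha hua => h2 a (Or.inr ha) hua⟩⟩,
            fun hux => h2 x (Or.inl rfl) hux⟩
        · rintro ⟨⟨huW, hnb⟩, hux⟩
          push_neg at hnb
          obtain ⟨h1, h2⟩ := hnb
          refine ⟨huW, ?_⟩
          push_neg
          refine ⟨h1, ?_⟩
          rintro a (rfl | ha) hua
          · exact absurd hua hux
          · exact h2 a ha hua
      rw [hU']
      have h1 : (U \ nbrF G x).card + (U ∩ nbrF G x).card = U.card :=
        Finset.card_sdiff_add_card_inter U (nbrF G x)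
      have h2 : Rx ⊆ U ∩ nbrF G x :=
        Finset.subset_inter hRxU (Finset.sdiff_subset)
      have h3 : (Rx.card : ℝ) ≤ ((U ∩ nbrF G x).card : ℝ) := by
        exact_mod_cast Finset.card_le_card h2
      have h4 : ((U \ nbrF G x).card : ℝ) + ((U ∩ nbrF G x).card : ℝ) = (U.card : ℝ) := by
        exact_mod_cast congrArg (fun k : ℕ => (k : ℝ)) h1
      push_cast
      linarith
  obtain ⟨L, hLC, hLq, hcase⟩ := aux q
  rcases hcase with h | h
  · exact ⟨L, hLC, hLq, h⟩
  · exfalso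
    have h0 : (0 : ℝ) ≤ ((W \ (T₁ ∪ L.biUnion (nbrF G))).card : ℝ) := by positivity
    linarith

/-- Hub-phase greedy: a few vertices of `Y \ W` can be used to prune `S₃`
so that afterwards no vertex outside `W` has many neighbours in it. -/
lemma exists_hub {G : SimpleGraph V} {X Y A : Finset V} {q : ℕ} {γ' tR : ℝ}
    (hγ : 0 < γ') (htR0 : 0 ≤ tR) (S₃ : Finset V)
    (hjunk : ((S₃ \ cl G X A).card : ℝ) ≤ tR + 1)
    (hq : tR + 2 ≤ (q : ℝ) * max (γ' * tR) 1) :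
    ∃ L : Finset V, L ⊆ Y \ nbr G A ∧ L.card ≤ q ∧
      ∀ y ∈ Y, y ∉ nbr G A →
        ((nbrF G y ∩ (S₃ \ L.biUnion (nbrF G))).card : ℝ) ≤ γ' * tR := by
  set C := cl G X A with hCdef
  set W := nbr G A with hWdef
  set c : ℝ := max (γ' * tR) 1 with hcdef
  have hnbrC : ∀ y : V, y ∉ W → ∀ u ∈ nbrF G y, u ∉ C := by
    intro y hy u hu huC
    exact hy (nbrF_subset_W huC (nbrF_comm.1 hu))
  have aux : ∀ m : ℕ, ∃ L : Finset V, L ⊆ Y \ W ∧ L.card ≤ m ∧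
      ((∀ y ∈ Y, y ∉ W →
          ((nbrF G y ∩ (S₃ \ L.biUnion (nbrF G))).card : ℝ) ≤ γ' * tR) ∨
        ((((S₃ \ L.biUnion (nbrF G)) \ C).card : ℝ) ≤ (tR + 1) - m * c)) := by
    intro m
    induction m with
    | zero =>
      refine ⟨∅, Finset.empty_subset _, le_refl _, Or.inr ?_⟩
      simp only [Finset.biUnion_empty, Finset.sdiff_empty, Nat.cast_zero, zero_mul,
        sub_zero]
      exact hjunk
    | succ m ih =>
      obtain ⟨L, hLY, hLm, hcase⟩ := ih
      rcases hcase with hdone | hrec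
      · exact ⟨L, hLY, hLm.trans (Nat.le_succ m), Or.inl hdone⟩
      by_cases hgoal : ∀ y ∈ Y, y ∉ W →
          ((nbrF G y ∩ (S₃ \ L.biUnion (nbrF G))).card : ℝ) ≤ γ' * tR
      · exact ⟨L, hLY, hLm.trans (Nat.le_succ m), Or.inl hgoal⟩
      push_neg at hgoal
      obtain ⟨y, hyY, hyW, hybad⟩ := hgoal
      set S' := S₃ \ L.biUnion (nbrF G) with hS'def
      set P := S' \ C with hPdef
      set Ry := nbrF G y ∩ S' with hRydef
      have hRyP : Ry ⊆ P := by
        intro u hu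
        obtain ⟨h1, h2⟩ := Finset.mem_inter.1 hu
        exact Finset.mem_sdiff.2 ⟨h2, hnbrC y hyW u h1⟩
      have hRyc : c ≤ (Ry.card : ℝ) := by
        have h1 : γ' * tR < (Ry.card : ℝ) := hybad
        have h2 : (1 : ℝ) ≤ (Ry.card : ℝ) := by
          have : 0 < Ry.card := by
            by_contra h
            push_neg at h
            have : Ry.card = 0 := by omega
            rw [this] at h1
            simp only [Nat.cast_zero] at h1
            nlinarith
          exact_mod_cast this
        exact max_le (le_of_lt h1) h2
      refine ⟨insert y L, Finset.insert_subset (Finset.mem_sdiff.2 ⟨hyY, hyW⟩) hLY,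
        (Finset.card_insert_le _ _).trans (Nat.succ_le_succ hLm), Or.inr ?_⟩
      have hP' : (S₃ \ (insert y L).biUnion (nbrF G)) \ C = P \ nbrF G y := by
        ext u
        simp only [hPdef, hS'def, Finset.mem_sdiff, Finset.mem_biUnion, Finset.mem_insert]
        constructor
        · rintro ⟨⟨h1, h2⟩, h3⟩
          push_neg at h2
          exact ⟨⟨⟨h1, by push_neg; exact fun a ha hua => h2 a (Or.inr ha) hua⟩, h3⟩,
            fun huy => h2 y (Or.inl rfl) huy⟩
        · rintro ⟨⟨⟨h1, h2⟩, h3⟩, h4⟩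
          push_neg at h2
          refine ⟨⟨h1, ?_⟩, h3⟩
          push_neg
          rintro a (rfl | ha) hua
          · exact absurd hua h4
          · exact h2 a ha hua
      rw [hP']
      have h1 : (P \ nbrF G y).card + (P ∩ nbrF G y).card = P.card :=
        Finset.card_sdiff_add_card_inter P (nbrF G y)
      have h2 : Ry ⊆ P ∩ nbrF G y := by
        intro u hu
        exact Finset.mem_inter.2 ⟨hRyP hu, Finset.mem_inter.1 hu |>.1⟩
      have h3 : (Ry.card : ℝ) ≤ ((P ∩ nbrF G y).card : ℝ) := by
        exact_mod_cast Finset.card_le_card h2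
      have h4 : ((P \ nbrF G y).card : ℝ) + ((P ∩ nbrF G y).card : ℝ) = (P.card : ℝ) := by
        exact_mod_cast congrArg (fun k : ℕ => (k : ℝ)) h1
      push_cast
      linarith
  obtain ⟨L, hLY, hLq, hcase⟩ := aux q
  rcases hcase with h | h
  · exact ⟨L, hLY, hLq, h⟩
  · exfalso
    have h0 : (0 : ℝ) ≤ (((S₃ \ L.biUnion (nbrF G)) \ C).card : ℝ) := by positivity
    linarith

end Stmt16
namespace Stmt16

variable {V : Type*} [Fintype V] [DecidableEq V]

/-- The deterministic container construction from the essential set `F`, a guessed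
parameter `th` and three guessed sets of vertices. -/
def bp (G : SimpleGraph V) (X Y F : Finset V) (d : ℕ) (γ' : ℝ) (th : ℕ)
    (L₁ L₂ L₃ : Finset V) : Finset V × Finset V :=
  let T₀ := F ∪ L₁.biUnion (nbrF G)
  let S₁ := X.filter fun x => ((nbrF G x \ T₀).card : ℝ) ≤ (d : ℝ) / 2
  let T₁ := T₀ ∪ Y.filter fun y => 2 * th < (nbrF G y ∩ S₁).card
  let T₃ := T₁ ∪ L₂.biUnion (nbrF G)
  let S₃ := X.filter fun x => ((nbrF G x \ T₃).card : ℝ) ≤ γ' * th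
  let S₄ := S₃ \ L₃.biUnion (nbrF G)
  let T₄ := T₃ ∪ Y.filter fun y => γ' * th < ((nbrF G y ∩ S₄).card : ℝ)
  (S₄, T₄)

lemma main {G : SimpleGraph V} {X Y : Finset V} {n d p q : ℕ} {γ' : ℝ}
    (hγ : 0 < γ')
    (hbip : IsBipartiteWith G X Y) (hreg : IsRegularDeg G d)
    (hXn : X.card = n) (hYn : Y.card = n) (hn : 0 < n) (hd : 0 < d)
    (hq2 : (2 : ℝ) / γ' + 2 ≤ (q : ℝ))
    (hp8 : 8 * (n : ℝ) * n ≤ (p : ℝ) * d * d)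
    (F : Finset V)
    {A : Finset V} (hA : A ⊆ X)
    (hbig : (10 + γ') * ((((nbr G A).card : ℝ) - ((cl G X A).card : ℝ)) + 2) ^ 2
      < (d : ℝ))
    (hess : EssentialSet G X d A F) :
    ∃ th ≤ n, ∃ L₁ L₂ L₃ : Finset V, L₁.card ≤ p ∧ L₂.card ≤ q ∧ L₃.card ≤ q ∧
      IsContainer G X Y d γ' A (bp G X Y F d γ' th L₁ L₂ L₃).1
        (bp G X Y F d γ' th L₁ L₂ L₃).2 := by
  classical
  set C := cl G X A with hCdef
  set W := nbr G A with hWdef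
  set tR : ℝ := ((W.card : ℝ) - (C.card : ℝ)) with htRdef
  have hCleW : C.card ≤ W.card := card_cl_le_card_nbr hreg hA hd
  have htR0 : 0 ≤ tR := by
    have : (C.card : ℝ) ≤ (W.card : ℝ) := by exact_mod_cast hCleW
    simp only [htRdef]; linarith
  set th := W.card - C.card with hthdef
  have hcast : (th : ℝ) = tR := by
    simp only [hthdef, htRdef]
    exact Nat.cast_sub hCleW
  have hdR : (0 : ℝ) < d := by exact_mod_cast hd
  -- numeric facts
  have R1 : 8 * tR ≤ (d : ℝ) := by nlinarith
  have R2 : 2 * tR ^ 2 + 2 * tR < (d : ℝ) := by nlinarith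
  have R3 : γ' * tR * (tR + 1) < (d : ℝ) := by nlinarith
  have hqmax : tR + 2 ≤ (q : ℝ) * max (γ' * tR) 1 := by
    rcases le_or_gt 1 (γ' * tR) with hcase | hcase
    · rw [max_eq_left hcase]
      have hqγ : 2 + 2 * γ' ≤ (q : ℝ) * γ' := by
        have h := mul_le_mul_of_nonneg_right hq2 hγ.le
        have h0 : (2 / γ' + 2) * γ' = 2 + 2 * γ' := by field_simp
        linarith
      have h5 : (2 + 2 * γ') * tR ≤ ((q : ℝ) * γ') * tR :=
        mul_le_mul_of_nonneg_right hqγ htR0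
      have h6 : ((q : ℝ) * γ') * tR = (q : ℝ) * (γ' * tR) := by ring
      have h7 : (2 + 2 * γ') * tR = 2 * tR + 2 * (γ' * tR) := by ring
      linarith [h5, h6, h7, hcase, htR0]
    · rw [max_eq_right (le_of_lt hcase)]
      have hinv : (0 : ℝ) < 1 / γ' := by positivity
      have h2 : tR < 1 / γ' := by
        rw [lt_div_iff₀ hγ]
        nlinarith
      have h3 : (2 : ℝ) / γ' = 2 * (1 / γ') := by ring
      nlinarith
  -- basic inclusions
  have hWY : W ⊆ Y := W_subset_Y hbip hA
  have hWn : W.card ≤ n := hYn ▸ Finset.card_le_card hWY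
  have hCn : C.card ≤ n := hXn ▸ Finset.card_le_card (cl_subset)
  have hFW : F ⊆ W := hess.1
  have hWbigF : Wbig G d A ⊆ F := hess.2.1
  have hthn : th ≤ n := le_trans (Nat.sub_le _ _) hWn
  -- Step 1 : bootstrap cover
  obtain ⟨L₁, hL₁C, hL₁p, hcov⟩ := exists_cover hreg hA hWn hCn hn hd R1 hp8
  set T₀ := F ∪ L₁.biUnion (nbrF G) with hT₀def
  have hT₀W : T₀ ⊆ W := by
    refine Finset.union_subset hFW ?_
    intro u hu
    obtain ⟨x, hx, hux⟩ := Finset.mem_biUnion.1 hu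
    exact nbrF_subset_W (hL₁C hx) hux
  have hcovT₀ : ((W \ T₀).card : ℝ) ≤ (d : ℝ) / 2 := by
    refine le_trans ?_ hcov
    have : W \ T₀ ⊆ W \ L₁.biUnion (nbrF G) :=
      Finset.sdiff_subset_sdiff (le_refl _) Finset.subset_union_right
    exact_mod_cast Finset.card_le_card this
  -- Step 2 : S₁ and junk bound
  set S₁ := X.filter (fun x => ((nbrF G x \ T₀).card : ℝ) ≤ (d : ℝ) / 2) with hS₁def
  have hCS₁ : C ⊆ S₁ := by
    intro x hx
    refine Finset.mem_filter.2 ⟨cl_subset hx, ?_⟩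
    refine le_trans ?_ hcovT₀
    have : nbrF G x \ T₀ ⊆ W \ T₀ :=
      Finset.sdiff_subset_sdiff (nbrF_subset_W hx) (le_refl _)
    exact_mod_cast Finset.card_le_card this
  have hS₁X : S₁ ⊆ X := Finset.filter_subset _ _
  have hjunk₁ : ((S₁ \ C).card : ℝ) ≤ 2 * tR := by
    have hjb := junk_bound hbip hreg hA S₁ T₀ ((d : ℝ) / 2) hT₀W hS₁X
      (fun x hx => (Finset.mem_filter.1 hx).2)
    rw [← hCdef, ← hWdef] at hjb
    have heq : (d : ℝ) * W.card - (d : ℝ) * C.card = d * tR := by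
      simp only [htRdef]; ring
    rw [heq] at hjb
    nlinarith
  -- Step 3 : certified T₁
  set T₁ := T₀ ∪ Y.filter (fun y => 2 * th < (nbrF G y ∩ S₁).card) with hT₁def
  have hsplit₁ : ∀ y : V, (nbrF G y ∩ S₁) ⊆ (nbrF G y ∩ C) ∪ (S₁ \ C) := by
    intro y u hu
    obtain ⟨h1, h2⟩ := Finset.mem_inter.1 hu
    by_cases hc : u ∈ C
    · exact Finset.mem_union_left _ (Finset.mem_inter.2 ⟨h1, hc⟩)
    · exact Finset.mem_union_right _ (Finset.mem_sdiff.2 ⟨h2, hc⟩)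
  have hT₁W : T₁ ⊆ W := by
    refine Finset.union_subset hT₀W ?_
    intro y hy
    obtain ⟨hyY, hybig⟩ := Finset.mem_filter.1 hy
    have hsum : ((nbrF G y ∩ S₁).card : ℝ)
        ≤ ((nbrF G y ∩ C).card : ℝ) + ((S₁ \ C).card : ℝ) := by
      have := Finset.card_le_card (hsplit₁ y)
      have h2 := Finset.card_union_le (nbrF G y ∩ C) (S₁ \ C)
      exact_mod_cast le_trans this h2
    have hbig' : (2 : ℝ) * th < ((nbrF G y ∩ S₁).card : ℝ) := by
      exact_mod_cast hybig
    have hpos : 0 < ((nbrF G y ∩ C).card : ℝ) := by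
      rw [hcast] at hbig'
      nlinarith
    have : (nbrF G y ∩ C).Nonempty := by
      rw [← Finset.card_pos]
      exact_mod_cast hpos
    obtain ⟨x, hx⟩ := this
    obtain ⟨hx1, hx2⟩ := Finset.mem_inter.1 hx
    exact nbrF_subset_W hx2 (nbrF_comm.1 hx1)
  have hU₁ : ((W \ T₁).card : ℝ) ≤ tR + 1 := by
    have hdef := defic_bound hreg hA (W \ T₁) (2 * tR) Finset.sdiff_subset ?_
    · have heq : (d : ℝ) * W.card - (d : ℝ) * C.card = d * tR := by
        simp only [htRdef]; ring
      rw [heq] at hdef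
      nlinarith
    · intro y hy
      obtain ⟨hyW, hyT⟩ := Finset.mem_sdiff.1 hy
      have hyY : y ∈ Y := hWY hyW
      have hynot : ¬ (2 * th < (nbrF G y ∩ S₁).card) := by
        intro hcon
        exact hyT (Finset.mem_union_right _ (Finset.mem_filter.2 ⟨hyY, hcon⟩))
      push_neg at hynot
      have h1 : (nbrF G y ∩ C).card ≤ (nbrF G y ∩ S₁).card :=
        Finset.card_le_card (Finset.inter_subset_inter (le_refl _) hCS₁)
      have : ((nbrF G y ∩ C).card : ℝ) ≤ 2 * (th : ℝ) := by
        exact_mod_cast le_trans h1 hynot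
      rw [hcast] at this
      linarith
  -- Step 4 : thin phase
  obtain ⟨L₂, hL₂C, hL₂q, hthin⟩ := exists_thin (X := X) hγ htR0 T₁ hU₁ hqmax
  set T₃ := T₁ ∪ L₂.biUnion (nbrF G) with hT₃def
  have hT₃W : T₃ ⊆ W := by
    refine Finset.union_subset hT₁W ?_
    intro u hu
    obtain ⟨x, hx, hux⟩ := Finset.mem_biUnion.1 hu
    exact nbrF_subset_W (hL₂C hx) hux
  -- Step 5 : S₃ and junk bound
  set S₃ := X.filter (fun x => ((nbrF G x \ T₃).card : ℝ) ≤ γ' * th) with hS₃def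
  have hCS₃ : C ⊆ S₃ := by
    intro x hx
    refine Finset.mem_filter.2 ⟨cl_subset hx, ?_⟩
    rw [hcast]
    exact hthin x hx
  have hS₃X : S₃ ⊆ X := Finset.filter_subset _ _
  have hjunk₃ : ((S₃ \ C).card : ℝ) ≤ tR + 1 := by
    have hjb := junk_bound hbip hreg hA S₃ T₃ (γ' * tR) hT₃W hS₃X ?_
    · rw [← hCdef, ← hWdef] at hjb
      have heq : (d : ℝ) * W.card - (d : ℝ) * C.card = d * tR := by
        simp only [htRdef]; ring
      rw [heq] at hjb
      have hpos : 0 < (d : ℝ) - γ' * tR := by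
        nlinarith [mul_nonneg (mul_nonneg hγ.le htR0) htR0]
      by_contra hcon
      push_neg at hcon
      have h5 : (tR + 1) * ((d : ℝ) - γ' * tR)
          < ((S₃ \ C).card : ℝ) * ((d : ℝ) - γ' * tR) :=
        mul_lt_mul_of_pos_right hcon hpos
      have h6 : (tR + 1) * ((d : ℝ) - γ' * tR)
          = (d : ℝ) * tR + ((d : ℝ) - γ' * tR * (tR + 1)) := by ring
      linarith
    · intro x hx
      have := (Finset.mem_filter.1 hx).2
      rwa [hcast] at this
  -- Step 6 : hub phase
  obtain ⟨L₃, hL₃YW, hL₃q, hhub⟩ := exists_hub (X := X) hγ htR0 S₃ hjunk₃ hqmax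
  set S₄ := S₃ \ L₃.biUnion (nbrF G) with hS₄def
  have hCS₄ : C ⊆ S₄ := by
    intro x hx
    refine Finset.mem_sdiff.2 ⟨hCS₃ hx, ?_⟩
    intro hcon
    obtain ⟨y, hy, hxy⟩ := Finset.mem_biUnion.1 hcon
    have hyYW := hL₃YW hy
    have : y ∈ W := nbrF_subset_W hx (nbrF_comm.1 hxy)
    exact (Finset.mem_sdiff.1 hyYW).2 this
  set T₄ := T₃ ∪ Y.filter (fun y => γ' * th < ((nbrF G y ∩ S₄).card : ℝ)) with hT₄def
  have hT₄W : T₄ ⊆ W := by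
    refine Finset.union_subset hT₃W ?_
    intro y hy
    obtain ⟨hyY, hybig⟩ := Finset.mem_filter.1 hy
    by_contra hyW
    have := hhub y hyY hyW
    rw [hcast] at hybig
    linarith
  -- assemble
  refine ⟨th, hthn, L₁, L₂, L₃, hL₁p, hL₂q, hL₃q, ?_⟩
  have hbp : bp G X Y F d γ' th L₁ L₂ L₃ = (S₄, T₄) := rfl
  rw [hbp]
  refine ⟨hCS₄, ?_, hT₄W, ?_, ?_⟩
  · -- Wbig ⊆ T₄
    refine hWbigF.trans ?_
    have h1 : F ⊆ T₀ := Finset.subset_union_left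
    have h2 : T₀ ⊆ T₁ := Finset.subset_union_left
    have h3 : T₁ ⊆ T₃ := Finset.subset_union_left
    have h4 : T₃ ⊆ T₄ := Finset.subset_union_left
    exact h1.trans (h2.trans (h3.trans h4))
  · -- degree condition for v ∈ S₄
    intro v hv
    have hvS₃ : v ∈ S₃ := (Finset.mem_sdiff.1 hv).1
    have hvbound := (Finset.mem_filter.1 hvS₃).2
    have hsub : nbrF G v ∩ (Y \ T₄) ⊆ nbrF G v \ T₃ := by
      intro u hu
      obtain ⟨h1, h2⟩ := Finset.mem_inter.1 hu
      obtain ⟨_, h3⟩ := Finset.mem_sdiff.1 h2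
      exact Finset.mem_sdiff.2 ⟨h1, fun hcon => h3 (Finset.subset_union_left hcon)⟩
    have hcard : ((nbrF G v ∩ (Y \ T₄)).card : ℝ) ≤ ((nbrF G v \ T₃).card : ℝ) := by
      exact_mod_cast Finset.card_le_card hsub
    have : (degIn G v (Y \ T₄) : ℝ) ≤ γ' * th := le_trans hcard hvbound
    rw [hcast] at this
    exact this
  · -- degree condition for v ∈ Y \ T₄
    intro v hv
    obtain ⟨hvY, hvT⟩ := Finset.mem_sdiff.1 hv
    have hynot : ¬ (γ' * th < ((nbrF G v ∩ S₄).card : ℝ)) := by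
      intro hcon
      exact hvT (Finset.mem_union_right _ (Finset.mem_filter.2 ⟨hvY, hcon⟩))
    push_neg at hynot
    have : (degIn G v S₄ : ℝ) ≤ γ' * th := hynot
    rw [hcast] at this
    exact this

end Stmt16
namespace Stmt16

open Filter

lemma exists_N0 (δ γ' : ℝ) (hδ : 0 < δ) (hγ : 0 < γ') (r : ℕ) :
    ∃ N0 : ℕ, ∀ n : ℕ, N0 ≤ n →
      3 ≤ n ∧ r + 2 ≤ n ∧ 2 ≤ δ * n ∧
      (10 + γ') * ((Real.log n) ^ 4 + 2) ^ 2 ≤ δ * n - 1 := by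
  set c : ℝ := 10 + γ' with hcdef
  have hc : 0 < c := by positivity
  have key : Tendsto (fun x : ℝ => (c * ((Real.log x) ^ 4 + 2) ^ 2 + 1) / x)
      atTop (nhds 0) := by
    have h8 : Tendsto (fun x : ℝ => Real.log x ^ 8 / (1 * x + 0)) atTop (nhds 0) :=
      Real.tendsto_pow_log_div_mul_add_atTop 1 0 8 one_ne_zero
    have h4 : Tendsto (fun x : ℝ => Real.log x ^ 4 / (1 * x + 0)) atTop (nhds 0) :=
      Real.tendsto_pow_log_div_mul_add_atTop 1 0 4 one_ne_zero
    simp only [one_mul, add_zero] at h8 h4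
    have hinv : Tendsto (fun x : ℝ => x⁻¹) atTop (nhds 0) := tendsto_inv_atTop_zero
    have heq : (fun x : ℝ => (c * ((Real.log x) ^ 4 + 2) ^ 2 + 1) / x)
        = fun x : ℝ => c * (Real.log x ^ 8 / x) + (4 * c) * (Real.log x ^ 4 / x)
          + (4 * c + 1) * x⁻¹ := by
      funext x
      ring
    rw [heq]
    have hlim := ((h8.const_mul c).add (h4.const_mul (4 * c))).add
      (hinv.const_mul (4 * c + 1))
    simpa using hlim
  have hev1 : ∀ᶠ x : ℝ in atTop, (c * ((Real.log x) ^ 4 + 2) ^ 2 + 1) / x < δ :=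
    key.eventually (gt_mem_nhds hδ)
  have hev2 : ∀ᶠ x : ℝ in atTop, (1 : ℝ) ≤ x := eventually_ge_atTop 1
  have hev3 : ∀ᶠ x : ℝ in atTop, (2 / δ : ℝ) ≤ x := eventually_ge_atTop _
  have hevR : ∀ᶠ x : ℝ in atTop,
      (2 ≤ δ * x ∧ c * ((Real.log x) ^ 4 + 2) ^ 2 ≤ δ * x - 1) := by
    filter_upwards [hev1, hev2, hev3] with x h1 h2 h3
    constructor
    · rw [div_le_iff₀ hδ] at h3
      linarith [h3]
    · have hx0 : (0 : ℝ) < x := lt_of_lt_of_le one_pos h2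
      rw [div_lt_iff₀ hx0] at h1
      have : δ * x ≤ δ * x := le_refl _
      nlinarith [h1]
  have hevN : ∀ᶠ m : ℕ in atTop,
      (2 ≤ δ * (m : ℝ) ∧ c * ((Real.log (m : ℝ)) ^ 4 + 2) ^ 2 ≤ δ * (m : ℝ) - 1) :=
    (tendsto_natCast_atTop_atTop (R := ℝ)).eventually hevR
  have hev4 : ∀ᶠ m : ℕ in atTop, 3 ≤ m := eventually_ge_atTop 3
  have hev5 : ∀ᶠ m : ℕ in atTop, r + 2 ≤ m := eventually_ge_atTop (r + 2)
  obtain ⟨N0, hN0⟩ := eventually_atTop.1 ((hevN.and hev4).and hev5)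
  refine ⟨N0, fun n hn => ?_⟩
  obtain ⟨⟨⟨hA, hB⟩, hC⟩, hD⟩ := hN0 n hn
  exact ⟨hC, hD, hA, hB⟩

end Stmt16


/-- for each `δ ∈ (0,1)` and `γ' > 0` there is `K = K(δ,γ')` such
that for all sufficiently large `n`, in a `⌊δn⌋`-regular bipartite graph with
parts of size `n`, for every `F ⊆ Y` there is a family `𝒞 ⊆ 2^X × 2^Y` with
`|𝒞| ≤ n^K` such that every `A ⊆ X` with `|N(A)| - |[A]| ≤ log⁴ n` for which `F`
is an essential set has a `γ'`-container in `𝒞`. -/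
theorem stmt_16 (δ : ℝ) (hδ : δ ∈ Set.Ioo (0:ℝ) 1) (γ' : ℝ) (hγ' : 0 < γ') :
    ∃ K : ℕ, ∃ N0 : ℕ,
      ∀ (V : Type) [Fintype V] [DecidableEq V] (G : SimpleGraph V)
        (X Y : Finset V) (n d : ℕ),
        N0 ≤ n → d = ⌊δ * (n : ℝ)⌋₊ →
        X.card = n → Y.card = n → IsBipartiteWith G X Y → IsRegularDeg G d →
        ∀ F ⊆ Y, ∃ 𝒞 : Finset (Finset V × Finset V), 𝒞.card ≤ n ^ K ∧
          ∀ A ⊆ X,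
            ((nbr G A).card : ℝ) - ((cl G X A).card : ℝ) ≤ (Real.log n) ^ 4 →
            EssentialSet G X d A F →
            ∃ p ∈ 𝒞, IsContainer G X Y d γ' A p.1 p.2 := by
  classical
  obtain ⟨hδ0, hδ1⟩ := hδ
  set p : ℕ := ⌈(32 : ℝ) / δ ^ 2⌉₊ + 1 with hpdef
  set q : ℕ := ⌈(2 : ℝ) / γ'⌉₊ + 2 with hqdef
  set r : ℕ := max p q with hrdef
  refine ⟨6 * r + 5, ?_⟩
  obtain ⟨N0, hN0⟩ := Stmt16.exists_N0 δ γ' hδ0 hγ' r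
  refine ⟨N0, ?_⟩
  intro V _ _ G X Y n d hn hdfloor hXn hYn hbip hreg F hFY
  obtain ⟨hn3, hrn, hδn2, hlogn⟩ := hN0 n hn
  have hn0 : 0 < n := by omega
  have hnR : (0 : ℝ) < n := by exact_mod_cast hn0
  -- facts about d
  have hdlow : δ * n - 1 < (d : ℝ) := by
    rw [hdfloor]
    have := Nat.lt_floor_add_one (δ * (n : ℝ))
    push_cast
    linarith
  have hd2 : δ * n / 2 ≤ (d : ℝ) := by linarith
  have hd0 : 0 < d := by
    have : (0 : ℝ) < (d : ℝ) := by linarith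
    exact_mod_cast this
  -- numeric hypotheses for `main`
  have hq2 : (2 : ℝ) / γ' + 2 ≤ (q : ℝ) := by
    have := Nat.le_ceil ((2 : ℝ) / γ')
    have hcast : ((⌈(2 : ℝ) / γ'⌉₊ + 2 : ℕ) : ℝ) = (⌈(2 : ℝ) / γ'⌉₊ : ℝ) + 2 := by
      push_cast; ring
    rw [hqdef]
    rw [hcast]
    linarith
  have hp32 : (32 : ℝ) / δ ^ 2 ≤ (p : ℝ) := by
    have := Nat.le_ceil ((32 : ℝ) / δ ^ 2)
    have hcast : ((⌈(32 : ℝ) / δ ^ 2⌉₊ + 1 : ℕ) : ℝ) = (⌈(32 : ℝ) / δ ^ 2⌉₊ : ℝ) + 1 := by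
      push_cast; ring
    rw [hpdef, hcast]
    linarith
  have hp8 : 8 * (n : ℝ) * n ≤ (p : ℝ) * d * d := by
    have h1 : (32 / δ ^ 2) * (δ * n / 2) ^ 2 ≤ (p : ℝ) * (δ * n / 2) ^ 2 :=
      mul_le_mul_of_nonneg_right hp32 (by positivity)
    have h2 : (32 / δ ^ 2) * (δ * (n : ℝ) / 2) ^ 2 = 8 * (n : ℝ) ^ 2 := by
      field_simp
      ring
    have h3 : (p : ℝ) * (δ * n / 2) ^ 2 ≤ (p : ℝ) * (d : ℝ) ^ 2 := by
      refine mul_le_mul_of_nonneg_left ?_ (by positivity)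
      have h0 : (0 : ℝ) ≤ δ * n / 2 := by positivity
      nlinarith
    nlinarith
  -- the candidate family
  set cand : Finset (Finset V) :=
    (Finset.range (r + 1)).biUnion
      (fun i => (Finset.univ : Finset V).powersetCard i) with hcanddef
  have hmem_cand : ∀ L : Finset V, L.card ≤ r → L ∈ cand := by
    intro L hL
    refine Finset.mem_biUnion.2 ⟨L.card, Finset.mem_range.2 (by omega), ?_⟩
    exact Finset.mem_powersetCard.2 ⟨Finset.subset_univ L, rfl⟩
  have hcardV : Fintype.card V = 2 * n := by
    have h1 : (Finset.univ : Finset V) = X ∪ Y := hbip.2.1.symm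
    have h2 : (X ∪ Y).card = X.card + Y.card := Finset.card_union_of_disjoint hbip.1
    rw [← Finset.card_univ, h1, h2, hXn, hYn]
    omega
  have hcand_card : cand.card ≤ (r + 1) * (2 * n) ^ r := by
    refine le_trans Finset.card_biUnion_le ?_
    have hbd : ∀ i ∈ Finset.range (r + 1),
        ((Finset.univ : Finset V).powersetCard i).card ≤ (2 * n) ^ r := by
      intro i hi
      rw [Finset.card_powersetCard, Finset.card_univ, hcardV]
      refine le_trans (Nat.choose_le_pow _ _) ?_
      exact Nat.pow_le_pow_right (by omega) (by
        have := Finset.mem_range.1 hi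
        omega)
    calc ∑ i ∈ Finset.range (r + 1), ((Finset.univ : Finset V).powersetCard i).card
        ≤ ∑ _i ∈ Finset.range (r + 1), (2 * n) ^ r := Finset.sum_le_sum hbd
      _ = (r + 1) * (2 * n) ^ r := by
          rw [Finset.sum_const, Finset.card_range, smul_eq_mul]
  set 𝒞 : Finset (Finset V × Finset V) :=
    ((Finset.range (n + 1)) ×ˢ (cand ×ˢ (cand ×ˢ cand))).image
      (fun z => Stmt16.bp G X Y F d γ' z.1 z.2.1 z.2.2.1 z.2.2.2) with h𝒞def
  refine ⟨𝒞, ?_, ?_⟩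
  · -- cardinality bound
    have h1 : 𝒞.card ≤ (n + 1) * (cand.card * (cand.card * cand.card)) := by
      refine le_trans Finset.card_image_le ?_
      rw [Finset.card_product, Finset.card_product, Finset.card_product,
        Finset.card_range]
    have hcL : cand.card ≤ n ^ (2 * r + 1) := by
      refine le_trans hcand_card ?_
      have h2n : 2 * n ≤ n ^ 2 := by nlinarith
      have h3 : (2 * n) ^ r ≤ (n ^ 2) ^ r := Nat.pow_le_pow_left h2n r
      have h4 : (n ^ 2) ^ r = n ^ (2 * r) := by
        rw [← pow_mul]
      have h5 : r + 1 ≤ n := by omega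
      calc (r + 1) * (2 * n) ^ r ≤ n * n ^ (2 * r) := by
            refine Nat.mul_le_mul h5 ?_
            rw [← h4]
            exact h3
        _ = n ^ (2 * r + 1) := by ring
    have hn1 : n + 1 ≤ n ^ 2 := by nlinarith
    calc 𝒞.card ≤ (n + 1) * (cand.card * (cand.card * cand.card)) := h1
      _ ≤ n ^ 2 * (n ^ (2 * r + 1) * (n ^ (2 * r + 1) * n ^ (2 * r + 1))) := by
          exact Nat.mul_le_mul hn1 (Nat.mul_le_mul hcL (Nat.mul_le_mul hcL hcL))
      _ = n ^ (6 * r + 5) := by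
          rw [← pow_add, ← pow_add, ← pow_add]
          ring_nf
  · -- the covering property
    intro A hA htlog hess
    have hCleW : (cl G X A).card ≤ (nbr G A).card :=
      Stmt16.card_cl_le_card_nbr hreg hA hd0
    have htR0 : (0 : ℝ) ≤ ((nbr G A).card : ℝ) - ((cl G X A).card : ℝ) := by
      have : ((cl G X A).card : ℝ) ≤ ((nbr G A).card : ℝ) := by exact_mod_cast hCleW
      linarith
    have hlog0 : (0 : ℝ) ≤ (Real.log n) ^ 4 := by positivity
    have hbig : (10 + γ') *
        ((((nbr G A).card : ℝ) - ((cl G X A).card : ℝ)) + 2) ^ 2 < (d : ℝ) := by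
      have hmono : ((((nbr G A).card : ℝ) - ((cl G X A).card : ℝ)) + 2) ^ 2
          ≤ ((Real.log n) ^ 4 + 2) ^ 2 := by
        have h1 : (((nbr G A).card : ℝ) - ((cl G X A).card : ℝ)) + 2
            ≤ (Real.log n) ^ 4 + 2 := by linarith
        nlinarith
      have h2 : (10 + γ') *
          ((((nbr G A).card : ℝ) - ((cl G X A).card : ℝ)) + 2) ^ 2
          ≤ (10 + γ') * ((Real.log n) ^ 4 + 2) ^ 2 :=
        mul_le_mul_of_nonneg_left hmono (by positivity)
      linarith
    obtain ⟨th, hthn, L₁, L₂, L₃, hL₁, hL₂, hL₃, hcont⟩ :=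
      Stmt16.main hγ' hbip hreg hXn hYn hn0 hd0 hq2 hp8 F hA hbig hess
    refine ⟨Stmt16.bp G X Y F d γ' th L₁ L₂ L₃, ?_, hcont⟩
    rw [h𝒞def]
    refine Finset.mem_image.2 ⟨(th, (L₁, (L₂, L₃))), ?_, rfl⟩
    refine Finset.mem_product.2 ⟨Finset.mem_range.2 (by omega), ?_⟩
    refine Finset.mem_product.2 ⟨hmem_cand L₁ (le_trans hL₁ (le_max_left _ _)), ?_⟩
    exact Finset.mem_product.2 ⟨hmem_cand L₂ (le_trans hL₂ (le_max_right _ _)),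
      hmem_cand L₃ (le_trans hL₃ (le_max_right _ _))⟩
end
end
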